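/- arXiv:1410.5670 — 3 statements merged into one kernel-verified Lean document; each statement's English description precedes it below -/
import Mathlib

section
/- Let 1 ≤ λ < ∞ and 1 ≤ p < ∞. A Banach space X has the weak λ-BAP for the ideal Π_p of absolutely p-summing operators if and only if X has the local λ-BAP for Π_p. -/
open Filter Topology

noncomputable section

/-- A bundled Banach space over the scalar field `𝕜`. -/
structure BanachSp (𝕜 : Type) [RCLike 𝕜] : Type 1 where
  carrier : Type
  [grp : NormedAddCommGroup carrier]
  [mod : NormedSpace 𝕜 carrier]
  [cpl : CompleteSpace carrier]

attribute [instance] BanachSp.grp BanachSp.mod BanachSp.cpl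

instance {𝕜 : Type} [RCLike 𝕜] : CoeSort (BanachSp 𝕜) Type :=
  ⟨BanachSp.carrier⟩

/-- The dual of a bundled Banach space, as a bundled Banach space. -/
def BanachSp.dual {𝕜 : Type} [RCLike 𝕜] (E : BanachSp 𝕜) : BanachSp 𝕜 :=
  .mk (StrongDual 𝕜 E)

/-- The canonical isometric embedding `J_E` of a Banach space into its bidual. -/
def canJ {𝕜 : Type} [RCLike 𝕜] (E : BanachSp 𝕜) : E →L[𝕜] E.dual.dual :=
  NormedSpace.inclusionInDoubleDual 𝕜 E

/-- The adjoint (dual/transpose) of a bounded operator between Banach spaces. -/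
def opAdj {𝕜 : Type} [RCLike 𝕜] {E F : BanachSp 𝕜} (T : E →L[𝕜] F) :
    F.dual →L[𝕜] E.dual :=
  (ContinuousLinearMap.compL 𝕜 E F 𝕜).flip T

/-- A continuous linear map has finite rank if its range is finite dimensional. -/
def IsFiniteRank {𝕜 : Type} [RCLike 𝕜] {E F : Type} [NormedAddCommGroup E] [NormedSpace 𝕜 E]
    [NormedAddCommGroup F] [NormedSpace 𝕜 F] (T : E →L[𝕜] F) : Prop :=
  FiniteDimensional 𝕜 (LinearMap.range (T : E →ₗ[𝕜] F))

/-- A (nonempty, upward-directed) index for a net. -/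
structure DirNet : Type 1 where
  ι : Type
  [pre : Preorder ι]
  [ne : Nonempty ι]
  [dir : IsDirected ι (· ≤ ·)]

attribute [instance] DirNet.pre DirNet.ne DirNet.dir

/-- The `atTop` filter of a directed index, describing eventual behaviour of nets. -/
def DirNet.filter (d : DirNet) : Filter d.ι := Filter.atTop

/-- A Banach operator ideal `A`: to each pair of Banach spaces `(E, F)` it assigns a
linear subspace `mem E F` of bounded operators together with an ideal norm `anorm`,
which is a complete norm on `mem E F`, contains the rank-one (hence all finite-rank)
operators with `‖x* ⊗ y‖_A = ‖x*‖ * ‖y*‖`, satisfies the ideal property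
`‖R T S‖_A ≤ ‖R‖ ‖T‖_A ‖S‖`, and dominates the operator norm. -/
structure OpIdeal (𝕜 : Type) [RCLike 𝕜] : Type 1 where
  mem : ∀ E F : BanachSp 𝕜, Set (E →L[𝕜] F)
  anorm : ∀ E F : BanachSp 𝕜, (E →L[𝕜] F) → ℝ
  zero_mem : ∀ E F : BanachSp 𝕜, (0 : E →L[𝕜] F) ∈ mem E F
  add_mem : ∀ (E F : BanachSp 𝕜) {T S : E →L[𝕜] F},
    T ∈ mem E F → S ∈ mem E F → T + S ∈ mem E F
  smul_mem : ∀ (E F : BanachSp 𝕜) (c : 𝕜) {T : E →L[𝕜] F}, T ∈ mem E F → c • T ∈ mem E F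
  anorm_add_le : ∀ (E F : BanachSp 𝕜) {T S : E →L[𝕜] F}, T ∈ mem E F → S ∈ mem E F →
    anorm E F (T + S) ≤ anorm E F T + anorm E F S
  anorm_smul : ∀ (E F : BanachSp 𝕜) (c : 𝕜) {T : E →L[𝕜] F}, T ∈ mem E F →
    anorm E F (c • T) = ‖c‖ * anorm E F T
  rankOne_mem : ∀ (E F : BanachSp 𝕜) (f : E →L[𝕜] 𝕜) (y : F), f.smulRight y ∈ mem E F
  anorm_rankOne : ∀ (E F : BanachSp 𝕜) (f : E →L[𝕜] 𝕜) (y : F),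
    anorm E F (f.smulRight y) = ‖f‖ * ‖y‖
  comp_mem : ∀ (E₀ E F F₀ : BanachSp 𝕜) (S : E₀ →L[𝕜] E) {T : E →L[𝕜] F} (R : F →L[𝕜] F₀),
    T ∈ mem E F → R.comp (T.comp S) ∈ mem E₀ F₀
  anorm_comp_le : ∀ (E₀ E F F₀ : BanachSp 𝕜) (S : E₀ →L[𝕜] E) {T : E →L[𝕜] F} (R : F →L[𝕜] F₀),
    T ∈ mem E F → anorm E₀ F₀ (R.comp (T.comp S)) ≤ ‖R‖ * anorm E F T * ‖S‖
  opNorm_le_anorm : ∀ (E F : BanachSp 𝕜) {T : E →L[𝕜] F}, T ∈ mem E F → ‖T‖ ≤ anorm E F T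
  complete : ∀ (E F : BanachSp 𝕜) (f : ℕ → (E →L[𝕜] F)), (∀ n, f n ∈ mem E F) →
    (∀ ε : ℝ, 0 < ε → ∃ N : ℕ, ∀ m ≥ N, ∀ n ≥ N, anorm E F (f m - f n) < ε) →
    ∃ T ∈ mem E F, ∀ ε : ℝ, 0 < ε → ∃ N : ℕ, ∀ n ≥ N, anorm E F (f n - T) < ε

/-- A closed operator ideal: an operator ideal whose components contain all finite-rank
operators and are closed in the operator norm; it carries the operator norm. -/
structure ClosedOpIdeal (𝕜 : Type) [RCLike 𝕜] : Type 1 where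
  mem : ∀ E F : BanachSp 𝕜, Set (E →L[𝕜] F)
  finiteRank_mem : ∀ (E F : BanachSp 𝕜) (T : E →L[𝕜] F), IsFiniteRank T → T ∈ mem E F
  add_mem : ∀ (E F : BanachSp 𝕜) {T S : E →L[𝕜] F},
    T ∈ mem E F → S ∈ mem E F → T + S ∈ mem E F
  smul_mem : ∀ (E F : BanachSp 𝕜) (c : 𝕜) {T : E →L[𝕜] F}, T ∈ mem E F → c • T ∈ mem E F
  comp_mem : ∀ (E₀ E F F₀ : BanachSp 𝕜) (S : E₀ →L[𝕜] E) {T : E →L[𝕜] F} (R : F →L[𝕜] F₀),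
    T ∈ mem E F → R.comp (T.comp S) ∈ mem E₀ F₀
  isClosed : ∀ E F : BanachSp 𝕜, IsClosed (mem E F)

/-- There is a net `(S_α)` of finite-rank operators on `X` converging to the identity
pointwise, with `cost (S_α) ≤ bound + ε` eventually, for every `ε > 0`
(i.e. `limsup_α cost (S_α) ≤ bound`). -/
def IdApproxPtw {𝕜 : Type} [RCLike 𝕜] (X : BanachSp 𝕜)
    (cost : (X →L[𝕜] X) → ℝ) (bound : ℝ) : Prop :=
  ∃ (d : DirNet) (S : d.ι → (X →L[𝕜] X)),
    (∀ α, IsFiniteRank (S α)) ∧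
    (∀ x : X, Tendsto (fun α => S α x) d.filter (𝓝 x)) ∧
    (∀ ε : ℝ, 0 < ε → ∀ᶠ α in d.filter, cost (S α) ≤ bound + ε)

/-- There is a net `(S_α)` of finite-rank operators on `X` converging to the identity
uniformly on every compact subset of `X`, with `limsup_α cost (S_α) ≤ bound`. -/
def IdApproxUnifComp {𝕜 : Type} [RCLike 𝕜] (X : BanachSp 𝕜)
    (cost : (X →L[𝕜] X) → ℝ) (bound : ℝ) : Prop :=
  ∃ (d : DirNet) (S : d.ι → (X →L[𝕜] X)),
    (∀ α, IsFiniteRank (S α)) ∧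
    (∀ K : Set X, IsCompact K →
      TendstoUniformlyOn (fun α (x : X) => S α x) (fun x => x) d.filter K) ∧
    (∀ ε : ℝ, 0 < ε → ∀ᶠ α in d.filter, cost (S α) ≤ bound + ε)

/-- There is a net `(S_α)` of finite-rank operators on `X` converging to the identity in
the topology `τ` on `L(X)`, with `limsup_α cost (S_α) ≤ bound`. -/
def IdApproxTau {𝕜 : Type} [RCLike 𝕜] (X : BanachSp 𝕜) (τ : TopologicalSpace (X →L[𝕜] X))
    (cost : (X →L[𝕜] X) → ℝ) (bound : ℝ) : Prop :=
  ∃ (d : DirNet) (S : d.ι → (X →L[𝕜] X)),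
    (∀ α, IsFiniteRank (S α)) ∧
    Tendsto S d.filter (@nhds _ τ (ContinuousLinearMap.id 𝕜 X)) ∧
    (∀ ε : ℝ, 0 < ε → ∀ᶠ α in d.filter, cost (S α) ≤ bound + ε)

/-- There is a net `(T_α)` of finite-rank operators from `X` to `Y` converging to `T`
pointwise, with `limsup_α cost (T_α) ≤ bound`. -/
def MapApproxPtw {𝕜 : Type} [RCLike 𝕜] {X Y : BanachSp 𝕜} (T : X →L[𝕜] Y)
    (cost : (X →L[𝕜] Y) → ℝ) (bound : ℝ) : Prop :=
  ∃ (d : DirNet) (Tα : d.ι → (X →L[𝕜] Y)),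
    (∀ α, IsFiniteRank (Tα α)) ∧
    (∀ x : X, Tendsto (fun α => Tα α x) d.filter (𝓝 (T x))) ∧
    (∀ ε : ℝ, 0 < ε → ∀ᶠ α in d.filter, cost (Tα α) ≤ bound + ε)

/-- `X` has the `λ`-BAP for the Banach operator ideal `A` (net converging to the identity
uniformly on compact sets, `limsup ‖T S_α‖_A ≤ λ ‖T‖_A`). -/
def HasBAPFor {𝕜 : Type} [RCLike 𝕜] (A : OpIdeal 𝕜) (l : ℝ) (X : BanachSp 𝕜) : Prop :=
  ∀ (Y : BanachSp 𝕜) (T : X →L[𝕜] Y), T ∈ A.mem X Y →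
    IdApproxUnifComp X (fun S => A.anorm X Y (T.comp S)) (l * A.anorm X Y T)

/-- `X` has the weak `λ`-BAP for the Banach operator ideal `A` (net converging to the
identity pointwise, `limsup ‖T S_α‖_A ≤ λ ‖T‖_A`). -/
def HasWeakBAPFor {𝕜 : Type} [RCLike 𝕜] (A : OpIdeal 𝕜) (l : ℝ) (X : BanachSp 𝕜) : Prop :=
  ∀ (Y : BanachSp 𝕜) (T : X →L[𝕜] Y), T ∈ A.mem X Y →
    IdApproxPtw X (fun S => A.anorm X Y (T.comp S)) (l * A.anorm X Y T)

/-- `X` has the local `λ`-BAP for the Banach operator ideal `A` (for every `T ∈ A(X;Y)`,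
a net of finite-rank operators converging to `T` pointwise with
`limsup ‖T_α‖_A ≤ λ ‖T‖_A`). -/
def HasLocalBAPFor {𝕜 : Type} [RCLike 𝕜] (A : OpIdeal 𝕜) (l : ℝ) (X : BanachSp 𝕜) : Prop :=
  ∀ (Y : BanachSp 𝕜) (T : X →L[𝕜] Y), T ∈ A.mem X Y →
    MapApproxPtw T (A.anorm X Y) (l * A.anorm X Y T)

/-- `X` has the approximation property: a net of finite-rank operators converging to the
identity uniformly on compact subsets of `X`. -/
def HasAP {𝕜 : Type} [RCLike 𝕜] (X : BanachSp 𝕜) : Prop :=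
  ∃ (d : DirNet) (S : d.ι → (X →L[𝕜] X)),
    (∀ α, IsFiniteRank (S α)) ∧
    ∀ K : Set X, IsCompact K →
      TendstoUniformlyOn (fun α (x : X) => S α x) (fun x => x) d.filter K
/-- An `A^{dual}`-null sequence in `E`: it factors as `x_n = R z_n` with `(z_n)` norm-null
and `R` an operator whose adjoint belongs to `A`. -/
def ADualNull {𝕜 : Type} [RCLike 𝕜] (A : OpIdeal 𝕜) (E : BanachSp 𝕜) (x : ℕ → E) : Prop :=
  ∃ (Z : BanachSp 𝕜) (R : Z →L[𝕜] E), opAdj R ∈ A.mem E.dual Z.dual ∧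
    ∃ z : ℕ → Z, Tendsto z atTop (𝓝 0) ∧ ∀ n, x n = R (z n)

/-- A Banach operator ideal is injective if membership and the ideal norm are not changed
by composition with an isometric embedding of the target space. -/
def OpIdeal.Injective {𝕜 : Type} [RCLike 𝕜] (A : OpIdeal 𝕜) : Prop :=
  ∀ (E F G : BanachSp 𝕜) (j : F →L[𝕜] G), (∀ y : F, ‖j y‖ = ‖y‖) →
    ∀ T : E →L[𝕜] F, j.comp T ∈ A.mem E G →
      T ∈ A.mem E F ∧ A.anorm E F T = A.anorm E G (j.comp T)

/-- A Banach operator ideal is surjective if membership and the ideal norm are not changed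
by precomposition with a metric surjection (mapping open unit ball onto open unit ball). -/
def OpIdeal.Surjective {𝕜 : Type} [RCLike 𝕜] (A : OpIdeal 𝕜) : Prop :=
  ∀ (Z E F : BanachSp 𝕜) (q : Z →L[𝕜] E),
    (q '' Metric.ball (0 : Z) 1 = Metric.ball (0 : E) 1) →
    ∀ T : E →L[𝕜] F, T.comp q ∈ A.mem Z F →
      T ∈ A.mem E F ∧ A.anorm E F T = A.anorm Z F (T.comp q)

/-- A closed operator ideal is injective if membership is not changed by composition with
an isometric embedding of the target space. -/
def ClosedOpIdeal.Injective {𝕜 : Type} [RCLike 𝕜] (A : ClosedOpIdeal 𝕜) : Prop :=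
  ∀ (E F G : BanachSp 𝕜) (j : F →L[𝕜] G), (∀ y : F, ‖j y‖ = ‖y‖) →
    ∀ T : E →L[𝕜] F, j.comp T ∈ A.mem E G → T ∈ A.mem E F

/-- A compact operator: the image of the closed unit ball is relatively compact. -/
def IsCompactOp {𝕜 : Type} [RCLike 𝕜] {X Y : BanachSp 𝕜} (T : X →L[𝕜] Y) : Prop :=
  IsCompact (closure (T '' Metric.closedBall (0 : X) 1))

/-- A weakly compact operator: the image of the closed unit ball is relatively compact in
the weak topology of the target space. -/
def IsWeaklyCompactOp {𝕜 : Type} [RCLike 𝕜] {X Y : BanachSp 𝕜} (T : X →L[𝕜] Y) : Prop :=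
  IsCompact (closure ((toWeakSpace 𝕜 Y) '' (T '' Metric.closedBall (0 : X) 1)))

/-- An approximable operator: an operator-norm limit of finite-rank operators. -/
def IsApproximable {𝕜 : Type} [RCLike 𝕜] {X Y : BanachSp 𝕜} (T : X →L[𝕜] Y) : Prop :=
  T ∈ closure {S : X →L[𝕜] Y | IsFiniteRank S}

/-- A nuclear representation of `T`: `T = Σ_n f_n ⊗ g_n` with `Σ_n ‖f_n‖ ‖g_n‖ < ∞`. -/
def NuclearRep {𝕜 : Type} [RCLike 𝕜] {X Y : BanachSp 𝕜} (T : X →L[𝕜] Y)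
    (f : ℕ → StrongDual 𝕜 X) (g : ℕ → Y) : Prop :=
  Summable (fun n => ‖f n‖ * ‖g n‖) ∧ ∀ x : X, T x = ∑' n, (f n x) • g n

/-- A nuclear operator. -/
def IsNuclear {𝕜 : Type} [RCLike 𝕜] {X Y : BanachSp 𝕜} (T : X →L[𝕜] Y) : Prop :=
  ∃ f g, NuclearRep T f g

/-- The nuclear norm: infimum of `Σ_n ‖f_n‖ ‖g_n‖` over nuclear representations. -/
def nuclearNorm {𝕜 : Type} [RCLike 𝕜] {X Y : BanachSp 𝕜} (T : X →L[𝕜] Y) : ℝ :=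
  sInf {c : ℝ | ∃ f g, NuclearRep T f g ∧ c = ∑' n, ‖f n‖ * ‖g n‖}

/-- The weak `ℓ_p` norm of a finite family: `sup_{‖f‖ ≤ 1} (Σ_i |f(x_i)|^p)^{1/p}`. -/
def weakLpNorm {𝕜 : Type} [RCLike 𝕜] {X : BanachSp 𝕜} (p : ℝ) {n : ℕ} (x : Fin n → X) : ℝ :=
  sSup {r : ℝ | ∃ f : StrongDual 𝕜 X, ‖f‖ ≤ 1 ∧ r = (∑ i, ‖f (x i)‖ ^ p) ^ (1 / p)}

/-- `C` is an absolutely `p`-summing constant for `T`. -/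
def PSummingWith {𝕜 : Type} [RCLike 𝕜] {X Y : BanachSp 𝕜} (p : ℝ) (T : X →L[𝕜] Y)
    (C : ℝ) : Prop :=
  0 ≤ C ∧ ∀ (n : ℕ) (x : Fin n → X),
    (∑ i, ‖T (x i)‖ ^ p) ^ (1 / p) ≤ C * weakLpNorm p x

/-- An absolutely `p`-summing operator. -/
def IsPSumming {𝕜 : Type} [RCLike 𝕜] {X Y : BanachSp 𝕜} (p : ℝ) (T : X →L[𝕜] Y) : Prop :=
  ∃ C, PSummingWith p T C

/-- The `p`-summing norm `π_p(T)`: the least `p`-summing constant. -/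
def piNorm {𝕜 : Type} [RCLike 𝕜] {X Y : BanachSp 𝕜} (p : ℝ) (T : X →L[𝕜] Y) : ℝ :=
  sInf {C : ℝ | PSummingWith p T C}

/-- A `p`-nuclear representation of `T` (with `q` the conjugate exponent of `p`):
`T = Σ_n f_n ⊗ g_n` with `(f_n)` strongly `p`-summable and `(g_n)` weakly `q`-summable. -/
def PNuclearRep {𝕜 : Type} [RCLike 𝕜] {X Y : BanachSp 𝕜} (p q : ℝ) (T : X →L[𝕜] Y)
    (f : ℕ → StrongDual 𝕜 X) (g : ℕ → Y) : Prop :=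
  Summable (fun n => ‖f n‖ ^ p) ∧
  (∀ h : StrongDual 𝕜 Y, ‖h‖ ≤ 1 → Summable (fun n => ‖h (g n)‖ ^ q)) ∧
  BddAbove {r : ℝ | ∃ h : StrongDual 𝕜 Y, ‖h‖ ≤ 1 ∧
    r = (∑' n, ‖h (g n)‖ ^ q) ^ (1 / q)} ∧
  ∀ x : X, T x = ∑' n, (f n x) • g n

/-- A `p`-nuclear operator (with `q` the conjugate exponent of `p`). -/
def IsPNuclear {𝕜 : Type} [RCLike 𝕜] {X Y : BanachSp 𝕜} (p q : ℝ) (T : X →L[𝕜] Y) : Prop :=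
  ∃ f g, PNuclearRep p q T f g

/-- The `p`-nuclear norm `ν_p(T)`: the infimum of
`(Σ_n ‖f_n‖^p)^{1/p} * sup_{‖h‖ ≤ 1} (Σ_n |h(g_n)|^q)^{1/q}` over representations. -/
def pNuclearNorm {𝕜 : Type} [RCLike 𝕜] {X Y : BanachSp 𝕜} (p q : ℝ) (T : X →L[𝕜] Y) : ℝ :=
  sInf {c : ℝ | ∃ f g, PNuclearRep p q T f g ∧
    c = (∑' n, ‖f n‖ ^ p) ^ (1 / p) *
      sSup {r : ℝ | ∃ h : StrongDual 𝕜 Y, ‖h‖ ≤ 1 ∧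
        r = (∑' n, ‖h (g n)‖ ^ q) ^ (1 / q)}}

/-- A relatively `p`-compact subset of `E` (with `q` the conjugate exponent of `p`):
contained in the `p`-convex hull of a strongly `p`-summable sequence. -/
def RelPCompact {𝕜 : Type} [RCLike 𝕜] {E : BanachSp 𝕜} (p q : ℝ) (K : Set E) : Prop :=
  ∃ x : ℕ → E, Summable (fun n => ‖x n‖ ^ p) ∧
    K ⊆ {y : E | ∃ a : ℕ → 𝕜, Summable (fun n => ‖a n‖ ^ q) ∧
      (∑' n, ‖a n‖ ^ q) ≤ 1 ∧ y = ∑' n, a n • x n}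

/-- The `p`-approximation property: a net of finite-rank operators converging to the
identity uniformly on every relatively `p`-compact subset. -/
def HasPAP {𝕜 : Type} [RCLike 𝕜] (p q : ℝ) (E : BanachSp 𝕜) : Prop :=
  ∃ (d : DirNet) (S : d.ι → (E →L[𝕜] E)),
    (∀ α, IsFiniteRank (S α)) ∧
    ∀ K : Set E, RelPCompact p q K →
      TendstoUniformlyOn (fun α (x : E) => S α x) (fun x => x) d.filter K

/-! ## auxiliary lemmas -/

section Stmt9Aux

variable {𝕜 : Type} [RCLike 𝕜]

private lemma stmt9_rpow_inv_rpow {p : ℝ} (hp : 0 < p) {a : ℝ} (ha : 0 ≤ a) :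
    (a ^ p) ^ (1 / p) = a := by
  rw [← Real.rpow_mul ha, one_div, mul_inv_cancel₀ hp.ne', Real.rpow_one]

private lemma stmt9_sum_rpow_smul {p : ℝ} (hp : 0 < p) {n : ℕ} (c : ℝ) (hc : 0 ≤ c)
    (v : Fin n → ℝ) (hv : ∀ i, 0 ≤ v i) :
    (∑ i, (c * v i) ^ p) ^ (1 / p) = c * (∑ i, v i ^ p) ^ (1 / p) := by
  have h1 : ∀ i ∈ Finset.univ, (c * v i) ^ p = c ^ p * v i ^ p := fun i _ =>
    Real.mul_rpow hc (hv i)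
  rw [Finset.sum_congr rfl h1, ← Finset.mul_sum,
    Real.mul_rpow (Real.rpow_nonneg hc p) (Finset.sum_nonneg fun i _ => Real.rpow_nonneg (hv i) p),
    stmt9_rpow_inv_rpow hp hc]

private lemma stmt9_weakLp_zero_mem {X : BanachSp 𝕜} {p : ℝ} (hp : 0 < p) {n : ℕ} (x : Fin n → X) :
    (0:ℝ) ∈ {r : ℝ | ∃ f : StrongDual 𝕜 X, ‖f‖ ≤ 1 ∧ r = (∑ i, ‖f (x i)‖ ^ p) ^ (1 / p)} := by
  refine ⟨0, by simp, ?_⟩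
  have h1 : ∀ i ∈ Finset.univ, ‖(0 : StrongDual 𝕜 X) (x i)‖ ^ p = (0:ℝ) := fun i _ => by
    simp [Real.zero_rpow hp.ne']
  rw [Finset.sum_congr rfl h1, Finset.sum_const_zero,
    Real.zero_rpow (one_div_pos.mpr hp).ne']

private lemma stmt9_weakLp_bdd {X : BanachSp 𝕜} {p : ℝ} (hp : 0 < p) {n : ℕ} (x : Fin n → X) :
    BddAbove {r : ℝ | ∃ f : StrongDual 𝕜 X, ‖f‖ ≤ 1 ∧ r = (∑ i, ‖f (x i)‖ ^ p) ^ (1 / p)} := by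
  refine ⟨(∑ i, ‖x i‖ ^ p) ^ (1 / p), ?_⟩
  rintro r ⟨f, hf, rfl⟩
  refine Real.rpow_le_rpow (Finset.sum_nonneg fun i _ => Real.rpow_nonneg (norm_nonneg _) p)
    (Finset.sum_le_sum fun i _ => ?_) (one_div_pos.mpr hp).le
  refine Real.rpow_le_rpow (norm_nonneg _) ?_ hp.le
  calc ‖f (x i)‖ ≤ ‖f‖ * ‖x i‖ := f.le_opNorm _
  _ ≤ 1 * ‖x i‖ := mul_le_mul_of_nonneg_right hf (norm_nonneg _)
  _ = ‖x i‖ := one_mul _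

private lemma stmt9_weakLp_nonneg {X : BanachSp 𝕜} {p : ℝ} (hp : 0 < p) {n : ℕ} (x : Fin n → X) :
    0 ≤ weakLpNorm (𝕜 := 𝕜) p x :=
  le_csSup (stmt9_weakLp_bdd hp x) (stmt9_weakLp_zero_mem hp x)

private lemma stmt9_le_weakLp {X : BanachSp 𝕜} {p : ℝ} (hp : 0 < p) {n : ℕ} (x : Fin n → X)
    (f : StrongDual 𝕜 X) :
    (∑ i, ‖f (x i)‖ ^ p) ^ (1 / p) ≤ ‖f‖ * weakLpNorm p x := by
  rcases eq_or_ne f 0 with rfl | hf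
  · have h1 : ∀ i ∈ Finset.univ, ‖(0 : StrongDual 𝕜 X) (x i)‖ ^ p = (0:ℝ) := fun i _ => by
      simp [Real.zero_rpow hp.ne']
    rw [Finset.sum_congr rfl h1, Finset.sum_const_zero,
      Real.zero_rpow (one_div_pos.mpr hp).ne', norm_zero, zero_mul]
  · have hfn : 0 < ‖f‖ := norm_pos_iff.mpr hf
    set c : 𝕜 := ((‖f‖⁻¹ : ℝ) : 𝕜) with hc
    have hcn : ‖c‖ = ‖f‖⁻¹ := by
      rw [hc, RCLike.norm_ofReal, abs_of_nonneg (inv_nonneg.mpr hfn.le)]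
    have hgn : ‖c • f‖ ≤ 1 := by
      rw [norm_smul, hcn, inv_mul_cancel₀ hfn.ne']
    have hmem : (∑ i, ‖(c • f) (x i)‖ ^ p) ^ (1 / p) ∈
        {r : ℝ | ∃ g : StrongDual 𝕜 X, ‖g‖ ≤ 1 ∧ r = (∑ i, ‖g (x i)‖ ^ p) ^ (1 / p)} :=
      ⟨c • f, hgn, rfl⟩
    have hle : (∑ i, ‖(c • f) (x i)‖ ^ p) ^ (1 / p) ≤ weakLpNorm p x :=
      le_csSup (stmt9_weakLp_bdd hp x) hmem
    have heq : (∑ i, ‖(c • f) (x i)‖ ^ p) ^ (1 / p)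
        = ‖f‖⁻¹ * (∑ i, ‖f (x i)‖ ^ p) ^ (1 / p) := by
      have h2 : ∀ i ∈ Finset.univ, ‖(c • f) (x i)‖ ^ p = (‖f‖⁻¹ * ‖f (x i)‖) ^ p := fun i _ => by
        rw [ContinuousLinearMap.smul_apply, norm_smul, hcn]
      rw [Finset.sum_congr rfl h2]
      exact stmt9_sum_rpow_smul hp _ (inv_nonneg.mpr hfn.le) _ (fun i => norm_nonneg _)
    rw [heq] at hle
    calc (∑ i, ‖f (x i)‖ ^ p) ^ (1 / p)
        = ‖f‖ * (‖f‖⁻¹ * (∑ i, ‖f (x i)‖ ^ p) ^ (1 / p)) := by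
          rw [← mul_assoc, mul_inv_cancel₀ hfn.ne', one_mul]
    _ ≤ ‖f‖ * weakLpNorm p x := mul_le_mul_of_nonneg_left hle hfn.le

private lemma stmt9_psw_smulRight {X Y : BanachSp 𝕜} {p : ℝ} (hp : 0 < p)
    (f : X →L[𝕜] 𝕜) (z : Y) : PSummingWith p (f.smulRight z) (‖f‖ * ‖z‖) := by
  refine ⟨by positivity, fun n x => ?_⟩
  have h1 : ∀ i ∈ Finset.univ, ‖(f.smulRight z) (x i)‖ ^ p = (‖z‖ * ‖f (x i)‖) ^ p := fun i _ => by
    rw [ContinuousLinearMap.smulRight_apply, norm_smul, mul_comm]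
  rw [Finset.sum_congr rfl h1,
    stmt9_sum_rpow_smul hp _ (norm_nonneg z) _ (fun i => norm_nonneg _)]
  calc ‖z‖ * (∑ i, ‖f (x i)‖ ^ p) ^ (1 / p) ≤ ‖z‖ * (‖f‖ * weakLpNorm p x) :=
        mul_le_mul_of_nonneg_left (stmt9_le_weakLp hp x f) (norm_nonneg z)
  _ = ‖f‖ * ‖z‖ * weakLpNorm p x := by ring

private lemma stmt9_psw_zero {X Y : BanachSp 𝕜} {p : ℝ} (hp : 0 < p) :
    PSummingWith p (0 : X →L[𝕜] Y) 0 := by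
  refine ⟨le_refl 0, fun n x => ?_⟩
  have h1 : ∀ i ∈ Finset.univ, ‖(0 : X →L[𝕜] Y) (x i)‖ ^ p = (0:ℝ) := fun i _ => by
    simp [Real.zero_rpow hp.ne']
  rw [Finset.sum_congr rfl h1, Finset.sum_const_zero,
    Real.zero_rpow (one_div_pos.mpr hp).ne', zero_mul]

private lemma stmt9_psw_add {X Y : BanachSp 𝕜} {p : ℝ} (hp : 1 ≤ p) {A B : X →L[𝕜] Y} {Ca Cb : ℝ}
    (ha : PSummingWith p A Ca) (hb : PSummingWith p B Cb) :
    PSummingWith p (A + B) (Ca + Cb) := by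
  have hp0 : 0 < p := lt_of_lt_of_le one_pos hp
  refine ⟨add_nonneg ha.1 hb.1, fun n x => ?_⟩
  have h1 : (∑ i, ‖(A + B) (x i)‖ ^ p) ^ (1 / p)
      ≤ (∑ i, (‖A (x i)‖ + ‖B (x i)‖) ^ p) ^ (1 / p) := by
    refine Real.rpow_le_rpow (Finset.sum_nonneg fun i _ => Real.rpow_nonneg (norm_nonneg _) p)
      (Finset.sum_le_sum fun i _ => ?_) (one_div_pos.mpr hp0).le
    refine Real.rpow_le_rpow (norm_nonneg _) ?_ hp0.le
    rw [ContinuousLinearMap.add_apply]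
    exact norm_add_le _ _
  have h2 := Real.Lp_add_le_of_nonneg (s := (Finset.univ : Finset (Fin n)))
    (f := fun i => ‖A (x i)‖) (g := fun i => ‖B (x i)‖) (p := p) hp
    (fun i _ => norm_nonneg _) (fun i _ => norm_nonneg _)
  calc (∑ i, ‖(A + B) (x i)‖ ^ p) ^ (1 / p)
      ≤ (∑ i, (‖A (x i)‖ + ‖B (x i)‖) ^ p) ^ (1 / p) := h1
  _ ≤ (∑ i, ‖A (x i)‖ ^ p) ^ (1 / p) + (∑ i, ‖B (x i)‖ ^ p) ^ (1 / p) := h2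
  _ ≤ Ca * weakLpNorm p x + Cb * weakLpNorm p x := add_le_add (ha.2 n x) (hb.2 n x)
  _ = (Ca + Cb) * weakLpNorm p x := (add_mul _ _ _).symm

private lemma stmt9_psw_mono {X Y : BanachSp 𝕜} {p : ℝ} (hp : 0 < p) {A : X →L[𝕜] Y} {C C' : ℝ}
    (h : PSummingWith p A C) (hCC : C ≤ C') : PSummingWith p A C' :=
  ⟨h.1.trans hCC, fun n x =>
    (h.2 n x).trans (mul_le_mul_of_nonneg_right hCC (stmt9_weakLp_nonneg hp x))⟩

private lemma stmt9_psw_congr {X Y1 Y2 : BanachSp 𝕜} {p : ℝ} {A : X →L[𝕜] Y1} {B : X →L[𝕜] Y2}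
    (hAB : ∀ x : X, ‖A x‖ = ‖B x‖) {C : ℝ} (h : PSummingWith p A C) : PSummingWith p B C := by
  refine ⟨h.1, fun n x => ?_⟩
  have h1 : ∀ i ∈ Finset.univ, ‖B (x i)‖ ^ p = ‖A (x i)‖ ^ p := fun i _ => by rw [hAB]
  rw [Finset.sum_congr rfl h1]
  exact h.2 n x

private lemma stmt9_psw_sum {X Y : BanachSp 𝕜} {p : ℝ} (hp : 1 ≤ p) {m : ℕ}
    (g : Fin m → (X →L[𝕜] 𝕜)) (w : Fin m → Y) (D : Fin m → ℝ)
    (hD : ∀ k, ‖g k‖ * ‖w k‖ ≤ D k) (s : Finset (Fin m)) :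
    PSummingWith p (∑ k ∈ s, (g k).smulRight (w k)) (∑ k ∈ s, D k) := by
  classical
  have hp0 : 0 < p := lt_of_lt_of_le one_pos hp
  induction s using Finset.cons_induction with
  | empty => simpa using stmt9_psw_zero (X := X) (Y := Y) hp0
  | cons a s ha ih =>
      rw [Finset.sum_cons, Finset.sum_cons]
      exact stmt9_psw_add hp (stmt9_psw_mono hp0 (stmt9_psw_smulRight hp0 _ _) (hD a)) ih

private lemma stmt9_piNorm_le {X Y : BanachSp 𝕜} {p : ℝ} {A : X →L[𝕜] Y} {C : ℝ}
    (h : PSummingWith p A C) : piNorm p A ≤ C :=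
  csInf_le ⟨0, fun _ hc => hc.1⟩ h

private lemma stmt9_psw_exists_lt {X Y : BanachSp 𝕜} {p : ℝ} {A : X →L[𝕜] Y}
    (hA : IsPSumming p A) {b : ℝ} (hb : piNorm p A < b) :
    ∃ C, PSummingWith p A C ∧ C < b := by
  obtain ⟨C, hC1, hC2⟩ := (csInf_lt_iff ⟨0, fun _ hc => hc.1⟩ hA).mp hb
  exact ⟨C, hC1, hC2⟩

private lemma stmt9_piNorm_congr {X Y1 Y2 : BanachSp 𝕜} {p : ℝ} {A : X →L[𝕜] Y1}
    {B : X →L[𝕜] Y2} (hAB : ∀ x : X, ‖A x‖ = ‖B x‖) : piNorm p A = piNorm p B := by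
  unfold piNorm
  congr 1
  ext C
  exact ⟨fun h => stmt9_psw_congr hAB h, fun h => stmt9_psw_congr (fun x => (hAB x).symm) h⟩

private lemma stmt9_fr_zero {X Y : BanachSp 𝕜} : IsFiniteRank (0 : X →L[𝕜] Y) := by
  unfold IsFiniteRank
  rw [show ((0 : X →L[𝕜] Y) : X →ₗ[𝕜] Y) = 0 from rfl, LinearMap.range_zero]
  infer_instance

private lemma stmt9_fr_smulRight {X Y : BanachSp 𝕜} (f : X →L[𝕜] 𝕜) (z : Y) :
    IsFiniteRank (f.smulRight z) := by
  unfold IsFiniteRank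
  have h1 : LinearMap.range ((f.smulRight z : X →L[𝕜] Y) : X →ₗ[𝕜] Y)
      ≤ Submodule.span 𝕜 {z} := by
    rintro y ⟨x, rfl⟩
    show (f.smulRight z) x ∈ _
    rw [ContinuousLinearMap.smulRight_apply]
    exact Submodule.smul_mem _ _ (Submodule.mem_span_singleton_self z)
  haveI := FiniteDimensional.span_of_finite 𝕜 (Set.finite_singleton z)
  exact Submodule.finiteDimensional_of_le h1

private lemma stmt9_fr_add {X Y : BanachSp 𝕜} {A B : X →L[𝕜] Y}
    (hA : IsFiniteRank A) (hB : IsFiniteRank B) : IsFiniteRank (A + B) := by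
  unfold IsFiniteRank at hA hB ⊢
  haveI := hA; haveI := hB
  haveI : FiniteDimensional 𝕜
      ↥(LinearMap.range (A : X →ₗ[𝕜] Y) ⊔ LinearMap.range (B : X →ₗ[𝕜] Y)) :=
    Submodule.finiteDimensional_sup _ _
  refine Submodule.finiteDimensional_of_le
    (?_ : _ ≤ LinearMap.range (A : X →ₗ[𝕜] Y) ⊔ LinearMap.range (B : X →ₗ[𝕜] Y))
  rintro y ⟨x, rfl⟩
  show A x + B x ∈ _
  exact Submodule.add_mem_sup (LinearMap.mem_range_self _ x) (LinearMap.mem_range_self _ x)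

private lemma stmt9_fr_sub {X Y : BanachSp 𝕜} {A B : X →L[𝕜] Y}
    (hA : IsFiniteRank A) (hB : IsFiniteRank B) : IsFiniteRank (A - B) := by
  have hnB : IsFiniteRank (-B) := by
    unfold IsFiniteRank at hB ⊢
    rw [show ((-B : X →L[𝕜] Y) : X →ₗ[𝕜] Y) = -(B : X →ₗ[𝕜] Y) from rfl, LinearMap.range_neg]
    exact hB
  rw [sub_eq_add_neg]
  exact stmt9_fr_add hA hnB

private lemma stmt9_fr_sum {X Y : BanachSp 𝕜} {m : ℕ} (g : Fin m → (X →L[𝕜] 𝕜))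
    (w : Fin m → Y) : IsFiniteRank (∑ k, (g k).smulRight (w k)) := by
  classical
  induction (Finset.univ : Finset (Fin m)) using Finset.cons_induction with
  | empty => simpa using stmt9_fr_zero (X := X) (Y := Y)
  | cons a s ha ih =>
      rw [Finset.sum_cons]
      exact stmt9_fr_add (stmt9_fr_smulRight _ _) ih

private lemma stmt9_fr_comp_right {X Y Z : BanachSp 𝕜} (T : Y →L[𝕜] Z) {S : X →L[𝕜] Y}
    (hS : IsFiniteRank S) : IsFiniteRank (T.comp S) := by
  unfold IsFiniteRank at hS ⊢
  haveI := hS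
  rw [ContinuousLinearMap.toLinearMap_comp, LinearMap.range_comp]
  exact Module.Finite.map _ _

private lemma stmt9_fr_comp_left {X Y Z : BanachSp 𝕜} {T : Y →L[𝕜] Z}
    (hT : IsFiniteRank T) (S : X →L[𝕜] Y) : IsFiniteRank (T.comp S) := by
  unfold IsFiniteRank at hT ⊢
  haveI := hT
  refine Submodule.finiteDimensional_of_le (?_ : _ ≤ LinearMap.range (T : Y →ₗ[𝕜] Z))
  rw [ContinuousLinearMap.toLinearMap_comp, LinearMap.range_comp]
  exact LinearMap.map_le_range

private lemma stmt9_arith1 {G e : ℝ} (hG : 0 ≤ G) (he : 0 < e) :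
    G * (e / (4 * (G + 1))) ≤ e / 4 := by
  have h1 : (0:ℝ) < 4 * (G + 1) := by linarith
  rw [show G * (e / (4 * (G + 1))) = G * e / (4 * (G + 1)) from by ring,
    div_le_div_iff₀ h1 (by norm_num : (0:ℝ) < 4)]
  nlinarith [mul_nonneg hG he.le]

private lemma stmt9_arith2 {G M d : ℝ} (hG : 0 ≤ G) (hM : 0 ≤ M) (hd : 0 < d) :
    G * (d / (2 * (G + 1) * (M + 1))) * M ≤ d / 2 := by
  have h1 : (0:ℝ) < 2 * (G + 1) * (M + 1) := by nlinarith
  rw [show G * (d / (2 * (G + 1) * (M + 1))) * M = G * M * d / (2 * (G + 1) * (M + 1)) from by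
      ring,
    div_le_div_iff₀ h1 (by norm_num : (0:ℝ) < 2)]
  nlinarith [mul_nonneg hG hM, mul_nonneg (mul_nonneg hG hM) hd.le,
    mul_nonneg hG hd.le, mul_nonneg hM hd.le]

private lemma stmt9_lemA {X Y : BanachSp 𝕜} {p : ℝ} (hp : 1 ≤ p) {l : ℝ}
    (T : X →L[𝕜] Y) (hT : IsPSumming p T)
    (h : ∀ (Y' : BanachSp 𝕜) (T' : X →L[𝕜] Y'), IsPSumming p T' →
        MapApproxPtw T' (fun S => piNorm p S) (l * piNorm p T'))
    (F : Finset X) {δ ε' : ℝ} (hδ : 0 < δ) (hε' : 0 < ε') :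
    ∃ Sh : X →L[𝕜] X, IsFiniteRank Sh ∧ (∀ x ∈ F, ‖T (Sh x) - T x‖ ≤ δ) ∧
      ∃ C : ℝ, PSummingWith p (T.comp Sh) C ∧ C ≤ l * piNorm p T + ε' := by
  classical
  have hp0 : 0 < p := lt_of_lt_of_le one_pos hp
  set Zc : Submodule 𝕜 Y := (LinearMap.range (T : X →ₗ[𝕜] Y)).topologicalClosure with hZcdef
  haveI : CompleteSpace ↥Zc := (Submodule.isClosed_topologicalClosure _).completeSpace_coe
  let Y1 : BanachSp 𝕜 := ⟨↥Zc⟩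
  have hmemT : ∀ x : X, T x ∈ Zc := fun x =>
    Submodule.le_topologicalClosure _ (LinearMap.mem_range_self (T : X →ₗ[𝕜] Y) x)
  let T1 : X →L[𝕜] Y1 := T.codRestrict Zc hmemT
  have hnorm : ∀ x : X, ‖T1 x‖ = ‖T x‖ := fun x => rfl
  have hT1 : IsPSumming p T1 := by
    obtain ⟨C, hC⟩ := hT
    exact ⟨C, stmt9_psw_congr (fun x => (hnorm x).symm) hC⟩
  have hpi1 : l * piNorm p T1 = l * piNorm p T := by rw [stmt9_piNorm_congr hnorm]
  obtain ⟨d, U, hUfr, hUconv, hUcost⟩ := h Y1 T1 hT1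
  haveI hNB : (d.filter).NeBot := Filter.atTop_neBot_iff.mpr ⟨d.ne, d.dir⟩
  have hev1 : ∀ᶠ α in d.filter, piNorm p (U α) ≤ l * piNorm p T + ε' / 4 := by
    have h0 := hUcost (ε' / 4) (by positivity)
    rw [hpi1] at h0
    exact h0
  have hev2 : ∀ᶠ α in d.filter, ∀ x ∈ F, ‖U α x - T1 x‖ ≤ δ / 2 := by
    rw [Filter.eventually_all_finset]
    intro x hx
    have h1 := Metric.tendsto_nhds.mp (hUconv x) (δ / 2) (by positivity)
    exact h1.mono fun α hα => by rw [dist_eq_norm] at hα; exact hα.le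
  obtain ⟨α, hα1, hα2⟩ := (hev1.and hev2).exists
  set U0 : X →L[𝕜] Y1 := U α with hU0def
  let Ub : X →L[𝕜] Y := (Zc.subtypeL).comp U0
  have hUbnorm : ∀ x : X, ‖Ub x‖ = ‖U0 x‖ := fun x => rfl
  haveI hfrU0 : FiniteDimensional 𝕜 ↥(LinearMap.range (U0 : X →ₗ[𝕜] Y1)) := hUfr α
  haveI hfrW : FiniteDimensional 𝕜 ↥(LinearMap.range (Ub : X →ₗ[𝕜] Y)) := by
    rw [show (Ub : X →ₗ[𝕜] Y) = (Zc.subtypeL : ↥Zc →ₗ[𝕜] Y).comp (U0 : X →ₗ[𝕜] Y1) from rfl,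
      LinearMap.range_comp]
    exact Module.Finite.map _ _
  set W : Submodule 𝕜 Y := LinearMap.range (Ub : X →ₗ[𝕜] Y) with hWdef
  haveI : FiniteDimensional 𝕜 ↥W := hfrW
  let bW : Module.Basis (Fin (Module.finrank 𝕜 ↥W)) 𝕜 ↥W := Module.finBasis 𝕜 ↥W
  let Ur : X →L[𝕜] ↥W := Ub.codRestrict W (fun x => LinearMap.mem_range_self (Ub : X →ₗ[𝕜] Y) x)
  let gk : Fin (Module.finrank 𝕜 ↥W) → (X →L[𝕜] 𝕜) :=
    fun k => (LinearMap.toContinuousLinearMap (bW.coord k)).comp Ur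
  let yk : Fin (Module.finrank 𝕜 ↥W) → Y := fun k => ((bW k : ↥W) : Y)
  have hgk : ∀ (k) (x : X), gk k x = bW.repr (Ur x) k := by
    intro k x
    show (LinearMap.toContinuousLinearMap (bW.coord k)) (Ur x) = _
    rw [LinearMap.coe_toContinuousLinearMap']
    exact bW.coord_apply _ _
  have hUdecomp : ∀ x : X, Ub x = ∑ k, gk k x • yk k := by
    intro x
    have h0 : (Ur x : ↥W) = ∑ k, bW.repr (Ur x) k • bW k := (bW.sum_repr (Ur x)).symm
    have h1 : Ub x = ((Ur x : ↥W) : Y) := rfl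
    rw [h1, h0, AddSubmonoidClass.coe_finset_sum]
    refine Finset.sum_congr rfl fun k _ => ?_
    rw [hgk k x]
    rfl
  have hWZc : W ≤ Zc := by
    rw [hWdef]
    rintro y ⟨x, rfl⟩
    exact ((U0 x : ↥Zc)).2
  have hykcl : ∀ k, yk k ∈ closure (Set.range (⇑T)) := by
    intro k
    have h3 : yk k ∈ Zc := hWZc (bW k).2
    have h4 : (Zc : Set Y) = closure ((LinearMap.range (T : X →ₗ[𝕜] Y) : Submodule 𝕜 Y) : Set Y) := by
      rw [hZcdef]; exact Submodule.topologicalClosure_coe _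
    have h5 : ((LinearMap.range (T : X →ₗ[𝕜] Y) : Submodule 𝕜 Y) : Set Y) = Set.range ⇑T := by
      rw [LinearMap.coe_range, ContinuousLinearMap.coe_coe]
    rw [← h5, ← h4]
    exact h3
  obtain ⟨G, hGdef⟩ : ∃ G : ℝ, G = ∑ k, ‖gk k‖ := ⟨_, rfl⟩
  have hG0 : 0 ≤ G := by
    rw [hGdef]; exact Finset.sum_nonneg fun k _ => norm_nonneg _
  obtain ⟨MF, hMFdef⟩ : ∃ MF : ℝ, MF = ∑ y ∈ F, ‖y‖ := ⟨_, rfl⟩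
  have hMF0 : 0 ≤ MF := by
    rw [hMFdef]; exact Finset.sum_nonneg fun y _ => norm_nonneg _
  have hMFx : ∀ x ∈ F, ‖x‖ ≤ MF := fun x hx => by
    rw [hMFdef]; exact Finset.single_le_sum (fun y _ => norm_nonneg y) hx
  have hGp : (0:ℝ) < G + 1 := by linarith only [hG0]
  have hMFp : (0:ℝ) < MF + 1 := by linarith only [hMF0]
  have hpos1 : (0:ℝ) < 4 * (G + 1) := by linarith only [hG0]
  have hpos2 : (0:ℝ) < 2 * (G + 1) * (MF + 1) :=
    mul_pos (by linarith only [hG0]) hMFp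
  obtain ⟨δ', hδ'def⟩ : ∃ d' : ℝ,
      d' = min (ε' / (4 * (G + 1))) (δ / (2 * (G + 1) * (MF + 1))) := ⟨_, rfl⟩
  have hδ'0 : 0 < δ' := by
    rw [hδ'def]; exact lt_min (div_pos hε' hpos1) (div_pos hδ hpos2)
  have hz : ∀ k, ∃ zk : X, ‖T zk - yk k‖ < δ' := by
    intro k
    obtain ⟨y, hy1, hy2⟩ := Metric.mem_closure_iff.mp (hykcl k) δ' hδ'0
    obtain ⟨zk, rfl⟩ := hy1
    exact ⟨zk, by rw [← dist_eq_norm, dist_comm]; exact hy2⟩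
  choose z hzk using hz
  set Sh : X →L[𝕜] X := ∑ k, (gk k).smulRight (z k) with hShdef
  have hShfr : IsFiniteRank Sh := stmt9_fr_sum _ _
  set Dc : X →L[𝕜] Y := ∑ k, (gk k).smulRight (T (z k) - yk k) with hDcdef
  have hSh_apply : ∀ x : X, Sh x = ∑ k, gk k x • z k := by
    intro x
    rw [hShdef]
    simp [ContinuousLinearMap.sum_apply, ContinuousLinearMap.smulRight_apply]
  have hTSh : T.comp Sh = Ub + Dc := by
    ext x
    rw [ContinuousLinearMap.comp_apply, hSh_apply x, map_sum,
      ContinuousLinearMap.add_apply, hUdecomp x, hDcdef, ContinuousLinearMap.sum_apply,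
      ← Finset.sum_add_distrib]
    refine Finset.sum_congr rfl fun k _ => ?_
    rw [map_smul, ContinuousLinearMap.smulRight_apply, smul_sub]
    abel
  have hUb_ps : IsPSumming p Ub := by
    refine ⟨∑ k, ‖gk k‖ * ‖yk k‖, ?_⟩
    have hUbsum : Ub = ∑ k, (gk k).smulRight (yk k) := by
      ext x
      rw [hUdecomp x, ContinuousLinearMap.sum_apply]
      exact Finset.sum_congr rfl fun k _ => rfl
    rw [hUbsum]
    exact stmt9_psw_sum hp _ _ _ (fun k => le_refl _) _
  have hU0_ps : IsPSumming p U0 := by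
    obtain ⟨C, hC⟩ := hUb_ps
    exact ⟨C, stmt9_psw_congr hUbnorm hC⟩
  have hpiU0lt : piNorm p U0 < l * piNorm p T + ε' / 2 :=
    lt_of_le_of_lt hα1 (by linarith only [hε'])
  obtain ⟨C0, hC0, hC0lt⟩ := stmt9_psw_exists_lt hU0_ps hpiU0lt
  have hC0b : PSummingWith p Ub C0 := stmt9_psw_congr (fun x => (hUbnorm x).symm) hC0
  have hcorr : PSummingWith p Dc (∑ k, ‖gk k‖ * δ') := by
    rw [hDcdef]
    exact stmt9_psw_sum hp _ _ _
      (fun k => mul_le_mul_of_nonneg_left (hzk k).le (norm_nonneg _)) _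
  have hsum_le : (∑ k, ‖gk k‖ * δ') ≤ ε' / 4 := by
    rw [← Finset.sum_mul, ← hGdef]
    have h6 : δ' ≤ ε' / (4 * (G + 1)) := by rw [hδ'def]; exact min_le_left _ _
    calc G * δ' ≤ G * (ε' / (4 * (G + 1))) := mul_le_mul_of_nonneg_left h6 hG0
    _ ≤ ε' / 4 := stmt9_arith1 hG0 hε'
  have hTSh_psw : PSummingWith p (T.comp Sh) (C0 + ∑ k, ‖gk k‖ * δ') := by
    rw [hTSh]
    exact stmt9_psw_add hp hC0b hcorr
  have hfinal : C0 + (∑ k, ‖gk k‖ * δ') ≤ l * piNorm p T + ε' := by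
    have h14 := add_le_add hC0lt.le hsum_le
    linarith only [h14, hε']
  refine ⟨Sh, hShfr, ?_, ⟨C0 + ∑ k, ‖gk k‖ * δ', hTSh_psw, hfinal⟩⟩
  intro x hx
  have hDx : ‖Dc x‖ ≤ G * δ' * ‖x‖ := by
    rw [hDcdef, ContinuousLinearMap.sum_apply]
    calc ‖∑ k, ((gk k).smulRight (T (z k) - yk k)) x‖
        ≤ ∑ k, ‖((gk k).smulRight (T (z k) - yk k)) x‖ := norm_sum_le _ _
    _ ≤ ∑ k, ‖gk k‖ * δ' * ‖x‖ := by
        refine Finset.sum_le_sum fun k _ => ?_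
        rw [ContinuousLinearMap.smulRight_apply, norm_smul]
        calc ‖gk k x‖ * ‖T (z k) - yk k‖ ≤ (‖gk k‖ * ‖x‖) * δ' :=
              mul_le_mul ((gk k).le_opNorm x) (hzk k).le (norm_nonneg _) (by positivity)
        _ = ‖gk k‖ * δ' * ‖x‖ := by ring
    _ = G * δ' * ‖x‖ := by rw [← Finset.sum_mul, ← Finset.sum_mul, ← hGdef]
  have hUbTx : ‖Ub x - T x‖ ≤ δ / 2 := by
    have h8 : Ub x - T x = ((U0 x - T1 x : ↥Zc) : Y) := rfl
    have h9 : ‖((U0 x - T1 x : ↥Zc) : Y)‖ = ‖U0 x - T1 x‖ := rfl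
    rw [h8, h9]
    exact hα2 x hx
  have hTShx : T (Sh x) - T x = Dc x + (Ub x - T x) := by
    have h10 : T (Sh x) = Ub x + Dc x := by
      have h11 := congrArg (fun (V : X →L[𝕜] Y) => V x) hTSh
      simpa [ContinuousLinearMap.comp_apply, ContinuousLinearMap.add_apply] using h11
    rw [h10]; abel
  rw [hTShx]
  calc ‖Dc x + (Ub x - T x)‖ ≤ ‖Dc x‖ + ‖Ub x - T x‖ := norm_add_le _ _
  _ ≤ G * δ' * ‖x‖ + δ / 2 := add_le_add hDx hUbTx
  _ ≤ δ / 2 + δ / 2 := by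
      have h11 : δ' ≤ δ / (2 * (G + 1) * (MF + 1)) := by
        rw [hδ'def]; exact min_le_right _ _
      have h12 : ‖x‖ ≤ MF := hMFx x hx
      have h13 : G * δ' * ‖x‖ ≤ δ / 2 := by
        calc G * δ' * ‖x‖ ≤ G * (δ / (2 * (G + 1) * (MF + 1))) * MF := by
              refine mul_le_mul (mul_le_mul_of_nonneg_left h11 hG0) h12 (norm_nonneg _)
                (mul_nonneg hG0 (div_pos hδ hpos2).le)
        _ ≤ δ / 2 := stmt9_arith2 hG0 hMF0 hδ
      exact add_le_add h13 (le_refl _)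
  _ = δ := by ring

private lemma stmt9_arith3 {B e : ℝ} (hB : 0 ≤ B) (he : 0 < e) :
    B * (e / (2 * (B + 1))) ≤ e / 2 := by
  have h1 : (0:ℝ) < 2 * (B + 1) := by linarith
  rw [show B * (e / (2 * (B + 1))) = B * e / (2 * (B + 1)) from by ring,
    div_le_div_iff₀ h1 (by norm_num : (0:ℝ) < 2)]
  nlinarith [mul_nonneg hB he.le]

private lemma stmt9_lemB {X Y : BanachSp 𝕜} {p : ℝ} (hp : 1 ≤ p) {l : ℝ}
    (T : X →L[𝕜] Y) (hT : IsPSumming p T)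
    (h : ∀ (Y' : BanachSp 𝕜) (T' : X →L[𝕜] Y'), IsPSumming p T' →
        MapApproxPtw T' (fun S => piNorm p S) (l * piNorm p T'))
    (E : Submodule 𝕜 X) [FiniteDimensional 𝕜 ↥E] {ε : ℝ} (hε : 0 < ε) :
    ∃ S : X →L[𝕜] X, IsFiniteRank S ∧ (∀ e ∈ E, S e = e) ∧
      piNorm p (T.comp S) ≤ l * piNorm p T + ε := by
  classical
  have hp0 : 0 < p := lt_of_lt_of_le one_pos hp
  let bE : Module.Basis (Fin (Module.finrank 𝕜 ↥E)) 𝕜 ↥E := Module.finBasis 𝕜 ↥E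
  have hext : ∀ j, ∃ β : X →L[𝕜] 𝕜,
      ∀ w : ↥E, β w = (LinearMap.toContinuousLinearMap (bE.coord j)) w := fun j => by
    obtain ⟨g, hg, _⟩ :=
      exists_extension_norm_eq E (LinearMap.toContinuousLinearMap (bE.coord j))
    exact ⟨g, hg⟩
  choose β hβ using hext
  let bx : Fin (Module.finrank 𝕜 ↥E) → X := fun j => ((bE j : ↥E) : X)
  set Q : X →L[𝕜] X := ∑ j, (β j).smulRight (bx j) with hQdef
  have hQapply : ∀ x : X, Q x = ∑ j, β j x • bx j := by
    intro x
    rw [hQdef]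
    simp [ContinuousLinearMap.sum_apply, ContinuousLinearMap.smulRight_apply]
  have hQE : ∀ e ∈ E, Q e = e := by
    intro e he
    rw [hQapply]
    have h1 : ∀ j, β j e = bE.repr ⟨e, he⟩ j := by
      intro j
      have h2 := hβ j ⟨e, he⟩
      rw [show ((⟨e, he⟩ : ↥E) : X) = e from rfl] at h2
      rw [h2, LinearMap.coe_toContinuousLinearMap']
      exact bE.coord_apply _ _
    have h3 : ∀ j ∈ Finset.univ, β j e • bx j = bE.repr ⟨e, he⟩ j • bx j := fun j _ => by
      rw [h1 j]
    rw [Finset.sum_congr rfl h3]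
    calc (∑ j, bE.repr ⟨e, he⟩ j • bx j)
        = ((∑ j, bE.repr ⟨e, he⟩ j • bE j : ↥E) : X) := by
          rw [AddSubmonoidClass.coe_finset_sum]
          exact Finset.sum_congr rfl fun j _ => rfl
    _ = e := by rw [bE.sum_repr ⟨e, he⟩]
  obtain ⟨B, hBdef⟩ : ∃ B : ℝ, B = ∑ j, ‖β j‖ := ⟨_, rfl⟩
  have hB0 : 0 ≤ B := by rw [hBdef]; exact Finset.sum_nonneg fun j _ => norm_nonneg _
  have hBp : (0:ℝ) < 2 * (B + 1) := by linarith only [hB0]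
  obtain ⟨Sh, hShfr, hShptw, C, hCpsw, hCle⟩ :=
    stmt9_lemA hp T hT h (Finset.image bx Finset.univ)
      (δ := ε / (2 * (B + 1))) (ε' := ε / 2) (div_pos hε hBp) (by positivity)
  set S : X →L[𝕜] X := Sh + (Q - Sh.comp Q) with hSdef
  have hSfr : IsFiniteRank S := by
    rw [hSdef]
    refine stmt9_fr_add hShfr (stmt9_fr_sub ?_ ?_)
    · rw [hQdef]; exact stmt9_fr_sum _ _
    · exact stmt9_fr_comp_right Sh (by rw [hQdef]; exact stmt9_fr_sum _ _)
  have hSE : ∀ e ∈ E, S e = e := by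
    intro e he
    rw [hSdef]
    simp only [ContinuousLinearMap.add_apply, ContinuousLinearMap.sub_apply,
      ContinuousLinearMap.comp_apply]
    rw [hQE e he]
    abel
  have hSx : ∀ x : X, S x = Sh x + (Q x - Sh (Q x)) := by
    intro x
    rw [hSdef]
    simp only [ContinuousLinearMap.add_apply, ContinuousLinearMap.sub_apply,
      ContinuousLinearMap.comp_apply]
  have hid : T.comp S = T.comp Sh + ∑ j, (β j).smulRight (T (bx j) - T (Sh (bx j))) := by
    ext x
    have hTQx : T (Q x) = ∑ j, β j x • T (bx j) := by
      rw [hQapply, map_sum]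
      exact Finset.sum_congr rfl fun j _ => map_smul T _ _
    have hShQx : T (Sh (Q x)) = ∑ j, β j x • T (Sh (bx j)) := by
      rw [hQapply, map_sum, map_sum]
      refine Finset.sum_congr rfl fun j _ => ?_
      rw [map_smul, map_smul]
    simp only [ContinuousLinearMap.comp_apply, ContinuousLinearMap.add_apply,
      ContinuousLinearMap.sum_apply, ContinuousLinearMap.smulRight_apply]
    rw [hSx, map_add, map_sub, hTQx, hShQx, ← Finset.sum_sub_distrib]
    congr 1
    exact Finset.sum_congr rfl fun j _ => (smul_sub _ _ _).symm
  have hcorr : PSummingWith p (∑ j, (β j).smulRight (T (bx j) - T (Sh (bx j))))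
      (∑ j, ‖β j‖ * (ε / (2 * (B + 1)))) := by
    refine stmt9_psw_sum hp _ _ _ (fun j => ?_) _
    refine mul_le_mul_of_nonneg_left ?_ (norm_nonneg _)
    have h5 : bx j ∈ Finset.image bx Finset.univ :=
      Finset.mem_image_of_mem bx (Finset.mem_univ j)
    have h6 := hShptw (bx j) h5
    rw [norm_sub_rev] at h6
    exact h6
  have hpswS : PSummingWith p (T.comp S) (C + ∑ j, ‖β j‖ * (ε / (2 * (B + 1)))) := by
    rw [hid]
    exact stmt9_psw_add hp hCpsw hcorr
  have hpile : piNorm p (T.comp S) ≤ C + ∑ j, ‖β j‖ * (ε / (2 * (B + 1))) :=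
    stmt9_piNorm_le hpswS
  have hsum2 : (∑ j, ‖β j‖ * (ε / (2 * (B + 1)))) ≤ ε / 2 := by
    rw [← Finset.sum_mul, ← hBdef]
    exact stmt9_arith3 hB0 hε
  refine ⟨S, hSfr, hSE, ?_⟩
  have h7 : C + (∑ j, ‖β j‖ * (ε / (2 * (B + 1)))) ≤ (l * piNorm p T + ε / 2) + ε / 2 :=
    add_le_add hCle hsum2
  linarith only [hpile, h7]

private lemma stmt9_mpr {X : BanachSp 𝕜} {p : ℝ} (hp : 1 ≤ p) {l : ℝ}
    (h : ∀ (Y' : BanachSp 𝕜) (T' : X →L[𝕜] Y'), IsPSumming p T' →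
        MapApproxPtw T' (fun S => piNorm p S) (l * piNorm p T'))
    (Y : BanachSp 𝕜) (T : X →L[𝕜] Y) (hT : IsPSumming p T) :
    IdApproxPtw X (fun S => piNorm p (T.comp S)) (l * piNorm p T) := by
  classical
  have key : ∀ a : Finset X × ℕ, ∃ S : X →L[𝕜] X, IsFiniteRank S ∧
      (∀ e ∈ Submodule.span 𝕜 (↑a.1 : Set X), S e = e) ∧
      piNorm p (T.comp S) ≤ l * piNorm p T + 1 / (a.2 + 1) := by
    intro a
    haveI : FiniteDimensional 𝕜 ↥(Submodule.span 𝕜 (↑a.1 : Set X)) :=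
      FiniteDimensional.span_of_finite 𝕜 a.1.finite_toSet
    exact stmt9_lemB hp T hT h (Submodule.span 𝕜 (↑a.1 : Set X)) (by positivity)
  choose Snet h1 h2 h3 using key
  letI instDir : IsDirected (Finset X × ℕ) (· ≤ ·) :=
    ⟨fun a b => ⟨(a.1 ∪ b.1, max a.2 b.2),
      ⟨Finset.subset_union_left, le_max_left _ _⟩,
      ⟨Finset.subset_union_right, le_max_right _ _⟩⟩⟩
  refine ⟨⟨Finset X × ℕ⟩, Snet, h1, ?_, ?_⟩
  · intro x
    have hev : ∀ᶠ a in (Filter.atTop : Filter (Finset X × ℕ)), Snet a x = x := by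
      refine Filter.eventually_of_mem (Filter.mem_atTop (({x}, 0) : Finset X × ℕ)) ?_
      intro b hb
      have hsub : ({x} : Finset X) ⊆ b.1 := hb.1
      exact h2 b x (Submodule.subset_span
        (Finset.mem_coe.mpr (hsub (Finset.mem_singleton_self x))))
    exact Filter.Tendsto.congr' (hev.mono fun a ha => ha.symm) tendsto_const_nhds
  · intro ε hε
    obtain ⟨k0, hk0⟩ := exists_nat_one_div_lt hε
    refine Filter.eventually_of_mem (Filter.mem_atTop ((∅ : Finset X), k0)) ?_
    intro b hb
    refine (h3 b).trans ?_
    have h4 : (1:ℝ) / (b.2 + 1) ≤ 1 / (k0 + 1) := by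
      apply one_div_le_one_div_of_le
      · positivity
      · have h5 : (k0:ℝ) ≤ b.2 := Nat.cast_le.mpr hb.2
        linarith only [h5]
    linarith only [h4, hk0]

end Stmt9Aux

/-! ## Statement 9 -/
theorem stmt9 {𝕜 : Type} [RCLike 𝕜] (l : ℝ) (hl : 1 ≤ l) (p : ℝ) (hp : 1 ≤ p)
    (X : BanachSp 𝕜) :
    (∀ (Y : BanachSp 𝕜) (T : X →L[𝕜] Y), IsPSumming p T →
        IdApproxPtw X (fun S => piNorm p (T.comp S)) (l * piNorm p T)) ↔
    (∀ (Y : BanachSp 𝕜) (T : X →L[𝕜] Y), IsPSumming p T →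
        MapApproxPtw T (fun S => piNorm p S) (l * piNorm p T)) := by
  constructor
  · -- weak λ-BAP ⇒ local λ-BAP : take T_α := T ∘ S_α
    intro h Y T hT
    obtain ⟨d, S, hfr, hconv, hcost⟩ := h Y T hT
    refine ⟨d, fun α => T.comp (S α), fun α => ?_, fun x => ?_, hcost⟩
    · have h1 := hfr α
      unfold IsFiniteRank at h1 ⊢
      rw [ContinuousLinearMap.toLinearMap_comp, LinearMap.range_comp]
      haveI := h1
      exact Module.Finite.map _ _
    · exact (T.continuous.tendsto x).comp (hconv x)
  · -- local λ-BAP ⇒ weak λ-BAP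
    intro h Y T hT
    exact stmt9_mpr hp h Y T hT
end
end

section
/- Let A be a Banach operator ideal, 1 ≤ λ < ∞, X a Banach space and τ any topology on L(X) = L(X;X). The following are equivalent: (i) for every Banach space Y and every T ∈ A^{reg}(X;Y) there is a net (S_α) of finite-rank operators on X such that S_α → I_X in τ and limsup_α ‖T S_α‖_{A^{reg}} ≤ λ‖T‖_{A^{reg}}; (ii) for every Banach space Y and every T ∈ A(X;Y*) there is a net (S_α) of finite-rank operators on X such that S_α → I_X in τ and limsup_α ‖T S_α‖_A ≤ λ‖T‖_A; (iii) for every Banach space Y and every T ∈ A(X;Y**) there is a net (S_α) of finite-rank operators on X such that S_α → I_X in τ and limsup_α ‖T S_α‖_A ≤ λ‖T‖_A. -/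
open Filter Topology

noncomputable section

lemma opAdj_norm_le' {𝕜 : Type} [RCLike 𝕜] {E F : BanachSp 𝕜} (j : E →L[𝕜] F) :
    ‖opAdj j‖ ≤ ‖j‖ := by
  refine ContinuousLinearMap.opNorm_le_bound _ (norm_nonneg j) fun f => ?_
  show ‖f.comp j‖ ≤ ‖j‖ * ‖f‖
  exact (ContinuousLinearMap.opNorm_comp_le f j).trans_eq (mul_comm _ _)

lemma canJ_norm_le' {𝕜 : Type} [RCLike 𝕜] (E : BanachSp 𝕜) : ‖canJ E‖ ≤ 1 :=
  NormedSpace.inclusionInDoubleDual_norm_le 𝕜 E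

lemma opAdj_canJ_canJ' {𝕜 : Type} [RCLike 𝕜] (Y : BanachSp 𝕜) (g : Y.dual) :
    opAdj (canJ Y) (canJ Y.dual g) = g := by
  refine ContinuousLinearMap.ext fun y => ?_
  rfl

lemma mem_comp_left' {𝕜 : Type} [RCLike 𝕜] (A : OpIdeal 𝕜) {X E F : BanachSp 𝕜}
    (j : E →L[𝕜] F) {T : X →L[𝕜] E} (hT : T ∈ A.mem X E) : j.comp T ∈ A.mem X F := by
  have := A.comp_mem X X E F (ContinuousLinearMap.id 𝕜 X) j hT
  rwa [ContinuousLinearMap.comp_id] at this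

lemma key_convert' {𝕜 : Type} [RCLike 𝕜] (A : OpIdeal 𝕜) (l : ℝ) (hl : 1 ≤ l)
    (X : BanachSp 𝕜) (τ : TopologicalSpace (X →L[𝕜] X)) (Y : BanachSp 𝕜)
    (T : X →L[𝕜] Y.dual) (hT : T ∈ A.mem X Y.dual)
    (h : IdApproxTau X τ
      (fun S => A.anorm X Y.dual.dual.dual (((canJ Y.dual).comp T).comp S))
      (l * A.anorm X Y.dual.dual.dual ((canJ Y.dual).comp T))) :
    IdApproxTau X τ (fun S => A.anorm X Y.dual (T.comp S)) (l * A.anorm X Y.dual T) := by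
  obtain ⟨d, S, hFR, hconv, hcost⟩ := h
  refine ⟨d, S, hFR, hconv, fun ε hε => ?_⟩
  filter_upwards [hcost ε hε] with α hα
  have hJT : (canJ Y.dual).comp T ∈ A.mem X Y.dual.dual.dual := mem_comp_left' A _ hT
  have hJTS : ((canJ Y.dual).comp T).comp (S α) ∈ A.mem X Y.dual.dual.dual := by
    have := A.comp_mem X X Y.dual.dual.dual Y.dual.dual.dual (S α)
      (ContinuousLinearMap.id 𝕜 Y.dual.dual.dual) hJT
    rwa [ContinuousLinearMap.id_comp] at this
  have hPid : ‖opAdj (canJ Y)‖ ≤ 1 := (opAdj_norm_le' _).trans (canJ_norm_le' Y)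
  have hnn1 : (0:ℝ) ≤ A.anorm X Y.dual.dual.dual (((canJ Y.dual).comp T).comp (S α)) :=
    le_trans (norm_nonneg _) (A.opNorm_le_anorm _ _ hJTS)
  have hnn2 : (0:ℝ) ≤ A.anorm X Y.dual T :=
    le_trans (norm_nonneg _) (A.opNorm_le_anorm _ _ hT)
  have hEq : T.comp (S α) = (opAdj (canJ Y)).comp ((((canJ Y.dual).comp T).comp (S α)).comp
      (ContinuousLinearMap.id 𝕜 X)) := by
    rw [ContinuousLinearMap.comp_id]
    exact ContinuousLinearMap.ext fun x => (opAdj_canJ_canJ' Y (T (S α x))).symm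
  have h1 : A.anorm X Y.dual (T.comp (S α)) ≤
      A.anorm X Y.dual.dual.dual (((canJ Y.dual).comp T).comp (S α)) := by
    rw [hEq]
    have hc := A.anorm_comp_le X X Y.dual.dual.dual Y.dual (ContinuousLinearMap.id 𝕜 X)
      (opAdj (canJ Y)) hJTS
    have hid : ‖ContinuousLinearMap.id 𝕜 X.carrier‖ ≤ 1 := ContinuousLinearMap.norm_id_le
    set a := A.anorm X Y.dual.dual.dual (((canJ Y.dual).comp T).comp (S α)) with ha
    have hb : ‖opAdj (canJ Y)‖ * a * ‖ContinuousLinearMap.id 𝕜 X.carrier‖ ≤ a := by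
      calc ‖opAdj (canJ Y)‖ * a * ‖ContinuousLinearMap.id 𝕜 X.carrier‖
          ≤ ‖opAdj (canJ Y)‖ * a * 1 :=
            mul_le_mul_of_nonneg_left hid (mul_nonneg (norm_nonneg _) hnn1)
        _ = ‖opAdj (canJ Y)‖ * a := mul_one _
        _ ≤ 1 * a := mul_le_mul_of_nonneg_right hPid hnn1
        _ = a := one_mul _
    linarith
  have h2 : A.anorm X Y.dual.dual.dual ((canJ Y.dual).comp T) ≤ A.anorm X Y.dual T := by
    have hEq2 : (canJ Y.dual).comp T = (canJ Y.dual).comp (T.comp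
        (ContinuousLinearMap.id 𝕜 X)) := by rw [ContinuousLinearMap.comp_id]
    rw [hEq2]
    have hc := A.anorm_comp_le X X Y.dual Y.dual.dual.dual (ContinuousLinearMap.id 𝕜 X)
      (canJ Y.dual) hT
    have hid : ‖ContinuousLinearMap.id 𝕜 X.carrier‖ ≤ 1 := ContinuousLinearMap.norm_id_le
    have hJ : ‖canJ Y.dual‖ ≤ 1 := canJ_norm_le' Y.dual
    set a := A.anorm X Y.dual T with ha
    have hb : ‖canJ Y.dual‖ * a * ‖ContinuousLinearMap.id 𝕜 X.carrier‖ ≤ a := by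
      calc ‖canJ Y.dual‖ * a * ‖ContinuousLinearMap.id 𝕜 X.carrier‖
          ≤ ‖canJ Y.dual‖ * a * 1 :=
            mul_le_mul_of_nonneg_left hid (mul_nonneg (norm_nonneg _) hnn2)
        _ = ‖canJ Y.dual‖ * a := mul_one _
        _ ≤ 1 * a := mul_le_mul_of_nonneg_right hJ hnn2
        _ = a := one_mul _
    linarith
  have h3 : l * A.anorm X Y.dual.dual.dual ((canJ Y.dual).comp T) ≤ l * A.anorm X Y.dual T :=
    mul_le_mul_of_nonneg_left h2 (by linarith)
  calc A.anorm X Y.dual (T.comp (S α))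
      ≤ A.anorm X Y.dual.dual.dual (((canJ Y.dual).comp T).comp (S α)) := h1
    _ ≤ l * A.anorm X Y.dual.dual.dual ((canJ Y.dual).comp T) + ε := hα
    _ ≤ l * A.anorm X Y.dual T + ε := by linarith

/-! ## Statement 12 -/
theorem stmt12 {𝕜 : Type} [RCLike 𝕜] (A : OpIdeal 𝕜) (l : ℝ) (hl : 1 ≤ l)
    (X : BanachSp 𝕜) (τ : TopologicalSpace (X →L[𝕜] X)) :
    ((∀ (Y : BanachSp 𝕜) (T : X →L[𝕜] Y), (canJ Y).comp T ∈ A.mem X Y.dual.dual →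
        IdApproxTau X τ (fun S => A.anorm X Y.dual.dual (((canJ Y).comp T).comp S))
          (l * A.anorm X Y.dual.dual ((canJ Y).comp T))) ↔
      (∀ (Y : BanachSp 𝕜) (T : X →L[𝕜] Y.dual), T ∈ A.mem X Y.dual →
        IdApproxTau X τ (fun S => A.anorm X Y.dual (T.comp S))
          (l * A.anorm X Y.dual T))) ∧
    ((∀ (Y : BanachSp 𝕜) (T : X →L[𝕜] Y.dual), T ∈ A.mem X Y.dual →
        IdApproxTau X τ (fun S => A.anorm X Y.dual (T.comp S))
          (l * A.anorm X Y.dual T)) ↔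
      (∀ (Y : BanachSp 𝕜) (T : X →L[𝕜] Y.dual.dual), T ∈ A.mem X Y.dual.dual →
        IdApproxTau X τ (fun S => A.anorm X Y.dual.dual (T.comp S))
          (l * A.anorm X Y.dual.dual T))) := by
  constructor
  · constructor
    · intro h Y T hT
      exact key_convert' A l hl X τ Y T hT (h Y.dual T (mem_comp_left' A _ hT))
    · intro h Y T hT
      exact h Y.dual ((canJ Y).comp T) hT
  · constructor
    · intro h Y T hT
      exact h Y.dual T hT
    · intro h Y T hT
      exact key_convert' A l hl X τ Y T hT
        (h Y.dual ((canJ Y.dual).comp T) (mem_comp_left' A _ hT))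
end
end

section
/- Let A be a Banach operator ideal such that T ∈ A(E;F) implies T** ∈ A(E**;F**) for all Banach spaces E, F (i.e., A ⊂ A^{dual dual}), and let X and Y be Banach spaces. Then the finite-rank operators from Y to X* are ‖·‖_A-dense in A(Y;X*) if and only if the finite-rank operators from X to Y* are ‖·‖_{A^{dual}}-dense in A^{dual}(X;Y*). -/
open Filter Topology

noncomputable section

section Lemmas
variable {𝕜 : Type} [RCLike 𝕜]

instance (E : BanachSp 𝕜) : FunLike (BanachSp.dual E).carrier E.carrier 𝕜 :=
  inferInstanceAs (FunLike (StrongDual 𝕜 E.carrier) E.carrier 𝕜)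

instance (E : BanachSp 𝕜) : ContinuousLinearMapClass (BanachSp.dual E).carrier 𝕜 E.carrier 𝕜 :=
  inferInstanceAs (ContinuousLinearMapClass (StrongDual 𝕜 E.carrier) 𝕜 E.carrier 𝕜)

lemma opAdj_apply {E F : BanachSp 𝕜} (T : E →L[𝕜] F) (g : F.dual) (x : E) :
    opAdj T g x = g (T x) := rfl

lemma canJ_apply {E : BanachSp 𝕜} (x : E) (f : E.dual) : canJ E x f = f x := rfl

lemma opAdj_sub {E F : BanachSp 𝕜} (T S : E →L[𝕜] F) :
    opAdj (T - S) = opAdj T - opAdj S := by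
  unfold opAdj; exact map_sub _ T S

lemma norm_opAdj_le {E F : BanachSp 𝕜} (T : E →L[𝕜] F) : ‖opAdj T‖ ≤ ‖T‖ := by
  refine ContinuousLinearMap.opNorm_le_bound _ (norm_nonneg T) fun g => ?_
  calc ‖(opAdj T) g‖ = ‖ContinuousLinearMap.comp g T‖ := rfl
    _ ≤ ‖g‖ * ‖T‖ := ContinuousLinearMap.opNorm_comp_le g T
    _ = ‖T‖ * ‖g‖ := mul_comm _ _

lemma norm_canJ_le (E : BanachSp 𝕜) : ‖canJ E‖ ≤ 1 :=
  NormedSpace.inclusionInDoubleDual_norm_le 𝕜 E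


variable {A : OpIdeal 𝕜}

lemma mem_sub {E F : BanachSp 𝕜} {T S : E →L[𝕜] F} (hT : T ∈ A.mem E F)
    (hS : S ∈ A.mem E F) : T - S ∈ A.mem E F := by
  rw [sub_eq_add_neg, ← neg_one_smul 𝕜 S]
  exact A.add_mem E F hT (A.smul_mem E F (-1) hS)

lemma anorm_nonneg {E F : BanachSp 𝕜} {T : E →L[𝕜] F} (hT : T ∈ A.mem E F) :
    0 ≤ A.anorm E F T := le_trans (norm_nonneg T) (A.opNorm_le_anorm E F hT)

lemma anorm_zero (E F : BanachSp 𝕜) : A.anorm E F 0 = 0 := by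
  have h := A.anorm_smul E F 0 (A.zero_mem E F)
  simpa using h

lemma anorm_neg {E F : BanachSp 𝕜} {T : E →L[𝕜] F} (hT : T ∈ A.mem E F) :
    A.anorm E F (-T) = A.anorm E F T := by
  have h := A.anorm_smul E F (-1) hT
  rw [neg_one_smul] at h
  simpa using h

lemma mem_comp_left {E F G : BanachSp 𝕜} {T : E →L[𝕜] F} (R : F →L[𝕜] G)
    (hT : T ∈ A.mem E F) : R.comp T ∈ A.mem E G := by
  have h := A.comp_mem E E F G (ContinuousLinearMap.id 𝕜 E) R hT
  rwa [ContinuousLinearMap.comp_id] at h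

lemma mem_comp_right {E F G : BanachSp 𝕜} {T : F →L[𝕜] G} (S : E →L[𝕜] F)
    (hT : T ∈ A.mem F G) : T.comp S ∈ A.mem E G := by
  have h := A.comp_mem E F G G S (ContinuousLinearMap.id 𝕜 G) hT
  rwa [ContinuousLinearMap.id_comp] at h

lemma anorm_comp_left_le {E F G : BanachSp 𝕜} {T : E →L[𝕜] F} (R : F →L[𝕜] G)
    (hT : T ∈ A.mem E F) : A.anorm E G (R.comp T) ≤ ‖R‖ * A.anorm E F T := by
  have h := A.anorm_comp_le E E F G (ContinuousLinearMap.id 𝕜 E) R hT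
  rw [ContinuousLinearMap.comp_id] at h
  have h1 : ‖ContinuousLinearMap.id 𝕜 E.carrier‖ ≤ 1 := ContinuousLinearMap.norm_id_le
  nlinarith [norm_nonneg R, anorm_nonneg hT, mul_nonneg (norm_nonneg R) (anorm_nonneg hT)]

lemma anorm_comp_right_le {E F G : BanachSp 𝕜} {T : F →L[𝕜] G} (S : E →L[𝕜] F)
    (hT : T ∈ A.mem F G) : A.anorm E G (T.comp S) ≤ A.anorm F G T * ‖S‖ := by
  have h := A.anorm_comp_le E F G G S (ContinuousLinearMap.id 𝕜 G) hT
  rw [ContinuousLinearMap.id_comp] at h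
  have h1 : ‖ContinuousLinearMap.id 𝕜 G.carrier‖ ≤ 1 := ContinuousLinearMap.norm_id_le
  nlinarith [norm_nonneg S, anorm_nonneg hT, mul_nonneg (anorm_nonneg hT) (norm_nonneg S)]


/-- A finite-rank representation. -/
def FinRep {E F : BanachSp 𝕜} (T : E →L[𝕜] F) : Prop :=
  ∃ (n : ℕ) (f : Fin n → (E →L[𝕜] 𝕜)) (y : Fin n → F),
    T = ∑ i, (f i).smulRight (y i)

lemma finRep_of_isFiniteRank {E F : BanachSp 𝕜} {T : E →L[𝕜] F}
    (h : IsFiniteRank T) : FinRep T := by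
  classical
  unfold IsFiniteRank at h
  set R := LinearMap.range (T : E.carrier →ₗ[𝕜] F.carrier) with hR
  haveI : FiniteDimensional 𝕜 R := h
  set n := Module.finrank 𝕜 R
  let b : Module.Basis (Fin n) 𝕜 R := Module.finBasis 𝕜 R
  have hmem : ∀ x : E.carrier, T x ∈ R := fun x => LinearMap.mem_range_self _ x
  let T0 : E.carrier →L[𝕜] R := T.codRestrict R hmem
  let f : Fin n → (E.carrier →L[𝕜] 𝕜) := fun i =>
    (LinearMap.toContinuousLinearMap (b.coord i)).comp T0
  refine ⟨n, f, fun i => (b i : F.carrier), ?_⟩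
  ext x
  have hx : (T0 x : F.carrier) = T x := rfl
  have hsum := b.sum_repr (T0 x)
  calc T x = ((T0 x : R) : F.carrier) := rfl
    _ = ((∑ i, b.repr (T0 x) i • b i : R) : F.carrier) := by rw [hsum]
    _ = ∑ i, b.repr (T0 x) i • (b i : F.carrier) := by
        rw [Submodule.coe_sum]; simp
    _ = (∑ i, (f i).smulRight (b i : F.carrier)) x := by
        simp [f, ContinuousLinearMap.sum_apply]

lemma isFiniteRank_of_finRep {E F : BanachSp 𝕜} {T : E →L[𝕜] F}
    (h : FinRep T) : IsFiniteRank T := by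
  classical
  obtain ⟨n, f, y, rfl⟩ := h
  unfold IsFiniteRank
  have hle : LinearMap.range ((∑ i, (f i).smulRight (y i) :
      E.carrier →L[𝕜] F.carrier) : E.carrier →ₗ[𝕜] F.carrier) ≤
      Submodule.span 𝕜 (Set.range y) := by
    rintro z ⟨x, rfl⟩
    simp only [ContinuousLinearMap.coe_coe, ContinuousLinearMap.sum_apply,
      ContinuousLinearMap.smulRight_apply]
    exact Submodule.sum_mem _ fun i _ =>
      Submodule.smul_mem _ _ (Submodule.subset_span ⟨i, rfl⟩)
  haveI : FiniteDimensional 𝕜 (Submodule.span 𝕜 (Set.range y)) :=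
    FiniteDimensional.span_of_finite 𝕜 (Set.finite_range y)
  exact Submodule.finiteDimensional_of_le hle

lemma finRep_mem {E F : BanachSp 𝕜} {T : E →L[𝕜] F} (h : FinRep T) :
    T ∈ A.mem E F := by
  obtain ⟨n, f, y, rfl⟩ := h
  let M : Submodule 𝕜 (E.carrier →L[𝕜] F.carrier) :=
    { carrier := A.mem E F
      add_mem' := fun ha hb => A.add_mem E F ha hb
      zero_mem' := A.zero_mem E F
      smul_mem' := fun c _ ha => A.smul_mem E F c ha }
  exact Submodule.sum_mem M fun i _ => A.rankOne_mem E F (f i) (y i)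

lemma finRep_comp_left {E F G : BanachSp 𝕜} {T : E →L[𝕜] F} (R : F →L[𝕜] G)
    (h : FinRep T) : FinRep (R.comp T) := by
  obtain ⟨n, f, y, rfl⟩ := h
  refine ⟨n, f, fun i => R (y i), ?_⟩
  ext x
  simp [ContinuousLinearMap.sum_apply]

lemma finRep_comp_right {E F G : BanachSp 𝕜} {T : F →L[𝕜] G} (S : E →L[𝕜] F)
    (h : FinRep T) : FinRep (T.comp S) := by
  obtain ⟨n, f, y, rfl⟩ := h
  refine ⟨n, fun i => (f i).comp S, y, ?_⟩
  ext x
  simp [ContinuousLinearMap.sum_apply]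

lemma finRep_opAdj {E F : BanachSp 𝕜} {T : E →L[𝕜] F} (h : FinRep T) :
    FinRep (opAdj T) := by
  obtain ⟨n, f, y, rfl⟩ := h
  refine ⟨n, fun i => canJ F (y i), fun i => f i, ?_⟩
  ext g
  refine ContinuousLinearMap.ext fun x => ?_
  show g ((∑ i, (f i).smulRight (y i)) x) =
    ((∑ i, ((canJ F (y i)).smulRight (f i))) g) x
  simp only [ContinuousLinearMap.sum_apply, ContinuousLinearMap.smulRight_apply,
    map_sum, map_smul, canJ_apply]
  refine Finset.sum_congr rfl fun i _ => ?_
  simp only [ContinuousLinearMap.smul_apply, smul_eq_mul, mul_comm]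
  change _ = (canJ F (y i) g • f i) x
  rw [ContinuousLinearMap.smul_apply, smul_eq_mul, canJ_apply, mul_comm]


lemma opAdj_comp {E F G : BanachSp 𝕜} (R : F →L[𝕜] G) (S : E →L[𝕜] F) :
    opAdj (R.comp S) = (opAdj S).comp (opAdj R) := by
  ext g
  exact DFunLike.ext _ _ fun x => rfl

/-- `V** ∘ J_E = J_F ∘ V`. -/
lemma biadj_comp_J {E F : BanachSp 𝕜} (V : E →L[𝕜] F) :
    (opAdj (opAdj V)).comp (canJ E) = (canJ F).comp V := by
  ext x
  exact DFunLike.ext _ _ fun g => rfl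

/-- `(J_E)* ∘ J_{E*} = id`. -/
lemma adjJ_comp_J (E : BanachSp 𝕜) :
    (opAdj (canJ E)).comp (canJ E.dual) = ContinuousLinearMap.id 𝕜 E.dual := by
  ext f
  exact DFunLike.ext _ _ fun x => rfl

/-- For `W : X →L Y*`, `W* = (J_X)* ∘ (W* ∘ J_Y)**`. -/
lemma opAdj_eq_dual_target {X Y : BanachSp 𝕜} (W : X →L[𝕜] Y.dual) :
    opAdj W = (opAdj (canJ X)).comp (opAdj (opAdj ((opAdj W).comp (canJ Y)))) := by
  ext g
  exact DFunLike.ext _ _ fun x => rfl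

/-- For `U : Y →L X*`, `((U* ∘ J_X))* ∘ J_Y = U`. -/
lemma adj_adjJ_comp_J {X Y : BanachSp 𝕜} (U : Y →L[𝕜] X.dual) :
    (opAdj ((opAdj U).comp (canJ X))).comp (canJ Y) = U := by
  ext y
  exact DFunLike.ext _ _ fun x => rfl


lemma opAdj_add {E F : BanachSp 𝕜} (T S : E →L[𝕜] F) :
    opAdj (T + S) = opAdj T + opAdj S := by
  unfold opAdj; exact map_add _ T S

lemma opAdj_smulc {E F : BanachSp 𝕜} (c : 𝕜) (T : E →L[𝕜] F) :
    opAdj (c • T) = c • opAdj T := by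
  unfold opAdj; exact map_smul _ c T

lemma continuous_opAdj (E F : BanachSp 𝕜) :
    Continuous (fun T : E →L[𝕜] F => opAdj T) :=
  ((ContinuousLinearMap.compL 𝕜 E.carrier F.carrier 𝕜).flip).continuous

end Lemmas

section IdealSpace
variable {𝕜 : Type} [RCLike 𝕜]

/-- The component of the ideal as a submodule. -/
def idealSubmodule (A : OpIdeal 𝕜) (E F : BanachSp 𝕜) :
    Submodule 𝕜 (E.carrier →L[𝕜] F.carrier) where
  carrier := A.mem E F
  add_mem' := fun ha hb => A.add_mem E F ha hb
  zero_mem' := A.zero_mem E F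
  smul_mem' := fun c _ ha => A.smul_mem E F c ha

/-- Type synonym for the component of the ideal, carrying the ideal norm. -/
def IdealOp (A : OpIdeal 𝕜) (E F : BanachSp 𝕜) : Type :=
  ↥(idealSubmodule A E F)

variable {A : OpIdeal 𝕜} {E F : BanachSp 𝕜}

def IdealOp.mk (T : E.carrier →L[𝕜] F.carrier) (h : T ∈ A.mem E F) : IdealOp A E F :=
  show ↥(idealSubmodule A E F) from ⟨T, h⟩

def IdealOp.op (a : IdealOp A E F) : E.carrier →L[𝕜] F.carrier :=
  (show ↥(idealSubmodule A E F) from a).1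

lemma IdealOp.mem (a : IdealOp A E F) : a.op ∈ A.mem E F :=
  (show ↥(idealSubmodule A E F) from a).2

lemma IdealOp.ext {a b : IdealOp A E F} (h : a.op = b.op) : a = b :=
  Subtype.ext h

instance : AddCommGroup (IdealOp A E F) :=
  inferInstanceAs (AddCommGroup ↥(idealSubmodule A E F))

instance : Module 𝕜 (IdealOp A E F) :=
  inferInstanceAs (Module 𝕜 ↥(idealSubmodule A E F))

lemma IdealOp.op_add (a b : IdealOp A E F) : (a + b).op = a.op + b.op := rfl
lemma IdealOp.op_sub (a b : IdealOp A E F) : (a - b).op = a.op - b.op := rfl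
lemma IdealOp.op_neg (a : IdealOp A E F) : (-a).op = -a.op := rfl
lemma IdealOp.op_zero : (0 : IdealOp A E F).op = 0 := rfl
lemma IdealOp.op_smul (c : 𝕜) (a : IdealOp A E F) : (c • a).op = c • a.op := rfl

noncomputable instance : NormedAddCommGroup (IdealOp A E F) :=
  AddGroupNorm.toNormedAddCommGroup
    { toFun := fun a => A.anorm E F a.op
      map_zero' := anorm_zero E F
      add_le' := fun a b => A.anorm_add_le E F a.mem b.mem
      neg' := fun a => anorm_neg a.mem
      eq_zero_of_map_eq_zero' := fun a h => by
        have h1 : ‖a.op‖ ≤ 0 := h ▸ A.opNorm_le_anorm E F a.mem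
        exact IdealOp.ext (norm_le_zero_iff.1 h1) }

lemma IdealOp.norm_def (a : IdealOp A E F) : ‖a‖ = A.anorm E F a.op := rfl

lemma IdealOp.dist_def (a b : IdealOp A E F) :
    dist a b = A.anorm E F (a.op - b.op) := by
  rw [dist_eq_norm, IdealOp.norm_def, IdealOp.op_sub]

noncomputable instance : NormedSpace 𝕜 (IdealOp A E F) :=
  ⟨fun c a => le_of_eq (by
    rw [IdealOp.norm_def, IdealOp.op_smul, A.anorm_smul E F c a.mem, IdealOp.norm_def])⟩

instance : CompleteSpace (IdealOp A E F) := by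
  refine Metric.complete_of_cauchySeq_tendsto fun u hu => ?_
  obtain ⟨T, hT, hconv⟩ := A.complete E F (fun n => (u n).op) (fun n => (u n).mem)
    (fun δ hδ => by
      obtain ⟨N, hN⟩ := Metric.cauchySeq_iff.1 hu δ hδ
      exact ⟨N, fun m hm n hn => by
        rw [← IdealOp.dist_def (u m) (u n)]; exact hN m hm n hn⟩)
  refine ⟨IdealOp.mk T hT, Metric.tendsto_atTop.2 fun δ hδ => ?_⟩
  obtain ⟨N, hN⟩ := hconv δ hδ
  exact ⟨N, fun n hn => by rw [IdealOp.dist_def]; exact hN n hn⟩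

lemma IdealOp.continuous_op :
    Continuous (fun a : IdealOp A E F => a.op) := by
  refine Metric.continuous_iff.2 fun a δ hδ => ⟨δ, hδ, fun b hb => ?_⟩
  have h1 : dist b.op a.op ≤ dist b a := by
    rw [dist_eq_norm, IdealOp.dist_def]
    exact A.opNorm_le_anorm E F (mem_sub b.mem a.mem)
  exact lt_of_le_of_lt h1 hb

/-- Key quantitative consequence of `A ⊆ A^{dd}`, via the closed graph theorem. -/
lemma biadj_anorm_small (A : OpIdeal 𝕜)
    (hbd : ∀ (E F : BanachSp 𝕜) (T : E →L[𝕜] F), T ∈ A.mem E F →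
      opAdj (opAdj T) ∈ A.mem E.dual.dual F.dual.dual)
    (E F : BanachSp 𝕜) {ε : ℝ} (hε : 0 < ε) :
    ∃ δ : ℝ, 0 < δ ∧ ∀ V : E →L[𝕜] F, V ∈ A.mem E F → A.anorm E F V < δ →
      A.anorm E.dual.dual F.dual.dual (opAdj (opAdj V)) < ε := by
  classical
  let g : IdealOp A E F →ₗ[𝕜] IdealOp A E.dual.dual F.dual.dual :=
    { toFun := fun a => IdealOp.mk (opAdj (opAdj a.op)) (hbd E F a.op a.mem)
      map_add' := fun a b => IdealOp.ext (by
        show opAdj (opAdj (a + b).op) = opAdj (opAdj a.op) + opAdj (opAdj b.op)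
        rw [IdealOp.op_add, opAdj_add, opAdj_add])
      map_smul' := fun c a => IdealOp.ext (by
        show opAdj (opAdj (c • a).op) = c • opAdj (opAdj a.op)
        rw [IdealOp.op_smul, opAdj_smulc, opAdj_smulc]) }
  have hgop : ∀ a : IdealOp A E F, (g a).op = opAdj (opAdj a.op) := fun a => rfl
  have hgcont : Continuous g := by
    refine g.continuous_of_seq_closed_graph fun u x y hux huy => ?_
    refine IdealOp.ext ?_
    have h1 : Tendsto (fun n => (u n).op) atTop (𝓝 x.op) :=
      (IdealOp.continuous_op.tendsto x).comp hux
    have h2 : Tendsto (fun n => opAdj (opAdj (u n).op)) atTop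
        (𝓝 (opAdj (opAdj x.op))) :=
      (((continuous_opAdj F.dual E.dual).comp (continuous_opAdj E F)).tendsto x.op).comp h1
    have h3 : Tendsto (fun n => (g (u n)).op) atTop (𝓝 y.op) :=
      (IdealOp.continuous_op.tendsto y).comp huy
    exact tendsto_nhds_unique h3 h2
  obtain ⟨δ, hδpos, hδ⟩ := Metric.continuousAt_iff.1 hgcont.continuousAt (ε := ε) hε
  refine ⟨δ, hδpos, fun V hV hVδ => ?_⟩
  have h1 : dist (IdealOp.mk V hV) (0 : IdealOp A E F) < δ := by
    rw [IdealOp.dist_def, IdealOp.op_zero, sub_zero]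
    exact hVδ
  have h2 := hδ h1
  rw [map_zero, IdealOp.dist_def, IdealOp.op_zero, sub_zero] at h2
  exact h2

end IdealSpace



/-! ## Statement 15 -/
theorem stmt15 {𝕜 : Type} [RCLike 𝕜] (A : OpIdeal 𝕜)
    (hbidual : ∀ (E F : BanachSp 𝕜) (T : E →L[𝕜] F), T ∈ A.mem E F →
      opAdj (opAdj T) ∈ A.mem E.dual.dual F.dual.dual)
    (X Y : BanachSp 𝕜) :
    (∀ T : Y →L[𝕜] X.dual, T ∈ A.mem Y X.dual →
        ∀ ε : ℝ, 0 < ε → ∃ S : Y →L[𝕜] X.dual, IsFiniteRank S ∧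
          A.anorm Y X.dual (T - S) < ε) ↔
    (∀ T : X →L[𝕜] Y.dual, opAdj T ∈ A.mem Y.dual.dual X.dual →
        ∀ ε : ℝ, 0 < ε → ∃ S : X →L[𝕜] Y.dual, IsFiniteRank S ∧
          A.anorm Y.dual.dual X.dual (opAdj (T - S)) < ε) := by
  constructor
  · -- forward direction
    intro h T hT ε hε
    obtain ⟨δ, hδpos, hδ⟩ := biadj_anorm_small A hbidual Y X.dual hε
    set U : Y.carrier →L[𝕜] X.dual.carrier := (opAdj T).comp (canJ Y) with hUdef
    have hU : U ∈ A.mem Y X.dual := mem_comp_right (canJ Y) hT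
    obtain ⟨G, hGfr, hGδ⟩ := h U hU δ hδpos
    have hGrep : FinRep G := finRep_of_isFiniteRank hGfr
    have hGmem : G ∈ A.mem Y X.dual := finRep_mem hGrep
    set S : X.carrier →L[𝕜] Y.dual.carrier := (opAdj G).comp (canJ X) with hSdef
    have hSfr : IsFiniteRank S :=
      isFiniteRank_of_finRep (finRep_comp_right (canJ X) (finRep_opAdj hGrep))
    refine ⟨S, hSfr, ?_⟩
    have hWJ : (opAdj (T - S)).comp (canJ Y) = U - G := by
      rw [opAdj_sub, ContinuousLinearMap.sub_comp, hSdef, adj_adjJ_comp_J]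
    have hkey : opAdj (T - S) =
        (opAdj (canJ X)).comp (opAdj (opAdj (U - G))) := by
      rw [opAdj_eq_dual_target (T - S), hWJ]
    have hUG : U - G ∈ A.mem Y X.dual := mem_sub hU hGmem
    have hbb : opAdj (opAdj (U - G)) ∈
        A.mem Y.dual.dual X.dual.dual.dual := hbidual Y X.dual (U - G) hUG
    have hbbε : A.anorm Y.dual.dual X.dual.dual.dual (opAdj (opAdj (U - G))) < ε :=
      hδ (U - G) hUG hGδ
    have h1 : A.anorm Y.dual.dual X.dual (opAdj (T - S)) ≤
        ‖opAdj (canJ X)‖ * A.anorm Y.dual.dual X.dual.dual.dual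
          (opAdj (opAdj (U - G))) := by
      rw [hkey]
      exact anorm_comp_left_le _ hbb
    have h2 : ‖opAdj (canJ X)‖ ≤ 1 := le_trans (norm_opAdj_le _) (norm_canJ_le X)
    have h3 := anorm_nonneg hbb
    calc A.anorm Y.dual.dual X.dual (opAdj (T - S)) ≤ _ := h1
      _ ≤ 1 * A.anorm Y.dual.dual X.dual.dual.dual (opAdj (opAdj (U - G))) :=
          mul_le_mul_of_nonneg_right h2 h3
      _ = _ := one_mul _
      _ < ε := hbbε
  · -- backward direction
    intro h U hU ε hε
    set T : X.carrier →L[𝕜] Y.dual.carrier := (opAdj U).comp (canJ X) with hTdef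
    have hT : opAdj T ∈ A.mem Y.dual.dual X.dual := by
      rw [hTdef, opAdj_comp]
      exact mem_comp_left (opAdj (canJ X)) (hbidual Y X.dual U hU)
    obtain ⟨S, hSfr, hSε⟩ := h T hT ε hε
    set G : Y.carrier →L[𝕜] X.dual.carrier := (opAdj S).comp (canJ Y) with hGdef
    have hGfr : IsFiniteRank G :=
      isFiniteRank_of_finRep (finRep_comp_right (canJ Y)
        (finRep_opAdj (finRep_of_isFiniteRank hSfr)))
    refine ⟨G, hGfr, ?_⟩
    have hUG : U - G = (opAdj (T - S)).comp (canJ Y) := by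
      rw [opAdj_sub, ContinuousLinearMap.sub_comp, hGdef, hTdef, adj_adjJ_comp_J]
    have hTS : opAdj (T - S) ∈ A.mem Y.dual.dual X.dual := by
      rw [opAdj_sub]
      exact mem_sub hT (finRep_mem (finRep_opAdj (finRep_of_isFiniteRank hSfr)))
    have h1 : A.anorm Y X.dual (U - G) ≤
        A.anorm Y.dual.dual X.dual (opAdj (T - S)) * ‖canJ Y‖ := by
      rw [hUG]
      exact anorm_comp_right_le _ hTS
    have h2 : ‖canJ Y‖ ≤ 1 := norm_canJ_le Y
    have h3 := anorm_nonneg hTS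
    calc A.anorm Y X.dual (U - G) ≤ _ := h1
      _ ≤ A.anorm Y.dual.dual X.dual (opAdj (T - S)) * 1 :=
          mul_le_mul_of_nonneg_left h2 h3
      _ = _ := mul_one _
      _ < ε := hSε
end
end
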